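/- arXiv:2006.00970 — 5 statements merged into one kernel-verified Lean document; each statement's English description precedes it below -/
import Mathlib

section
/- Let G be an LWF chain graph with vertex set V, let P be a joint probability distribution over random variables indexed by V that satisfies the global Markov property with respect to G, and let T ∈ V. Then under P, the variable T is conditionally independent of the variables V∖({T}∪Mb(T)) given the variables Mb(T). -/
/- Formalization of LWF chain graphs, routes, sections, c-separation,
   minimal complexes, Markov blankets, moral graphs, and ancestral sets. -/

namespace LWF

/-- An LWF chain graph: a mixed graph with directed edges `dir` and (symmetric)
undirected edges `undir`, no loops, no pair of vertices joined by more than one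
edge, and no partially directed cycles. -/
structure ChainGraph (V : Type*) where
  dir : V → V → Prop
  undir : V → V → Prop
  undir_symm : ∀ u v, undir u v → undir v u
  dir_irrefl : ∀ v, ¬ dir v v
  undir_irrefl : ∀ v, ¬ undir v v
  dir_asymm : ∀ u v, dir u v → ¬ dir v u
  dir_not_undir : ∀ u v, dir u v → ¬ undir u v
  /-- No partially directed cycle: there is no sequence `ρ 0, …, ρ n` (`n ≥ 2`)
  with `ρ n = ρ 0`, the vertices `ρ 0, …, ρ (n-1)` distinct, every consecutive
  pair joined by `dir` or `undir` (in the forward direction), and at least one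
  forward directed edge on it. -/
  no_partially_directed_cycle :
    ∀ (n : ℕ) (ρ : ℕ → V), 2 ≤ n → ρ n = ρ 0 →
      (∀ i j, i < j → j < n → ρ i ≠ ρ j) →
      (∀ i, i < n → dir (ρ i) (ρ (i+1)) ∨ undir (ρ i) (ρ (i+1))) →
      ¬ ∃ i, i < n ∧ dir (ρ i) (ρ (i+1))

namespace ChainGraph

variable {V : Type*}

/-- Two vertices are adjacent if they are joined by a directed or an undirected edge. -/
def Adj (G : ChainGraph V) (u v : V) : Prop := G.dir u v ∨ G.dir v u ∨ G.undir u v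

/-- A partially directed path from `u` to `w`: a sequence of distinct vertices,
each consecutive pair joined by a forward directed or an undirected edge, with
at least one directed edge on it. -/
def PDPath (G : ChainGraph V) (u w : V) : Prop :=
  ∃ (n : ℕ) (ρ : ℕ → V), 1 ≤ n ∧ ρ 0 = u ∧ ρ n = w ∧
    (∀ i j, i ≤ n → j ≤ n → i ≠ j → ρ i ≠ ρ j) ∧
    (∀ i, i < n → G.dir (ρ i) (ρ (i+1)) ∨ G.undir (ρ i) (ρ (i+1))) ∧
    (∃ i, i < n ∧ G.dir (ρ i) (ρ (i+1)))

/-- `an(Z)`: the set of vertices having a partially directed path to some vertex of `Z`. -/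
def anc (G : ChainGraph V) (Z : Set V) : Set V := {x | ∃ z ∈ Z, G.PDPath x z}

/-- Parents of `v`. -/
def pa (G : ChainGraph V) (v : V) : Set V := {u | G.dir u v}

/-- Children of `v`. -/
def ch (G : ChainGraph V) (v : V) : Set V := {u | G.dir v u}

/-- Neighbours of `v`. -/
def nb (G : ChainGraph V) (v : V) : Set V := {u | G.undir u v}

/-- A minimal complex `a → ρ 1 − ⋯ − ρ n ← b` (with `ρ 0 = a`, `ρ (n+1) = b`,
`n ≥ 1`): all vertices distinct, the indicated edges present, and it is an
induced subgraph, i.e. the only adjacencies among its vertices are between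
consecutive ones (in particular `a` and `b` are non-adjacent). -/
def IsMinimalComplex (G : ChainGraph V) (a b : V) (n : ℕ) (ρ : ℕ → V) : Prop :=
  1 ≤ n ∧ ρ 0 = a ∧ ρ (n+1) = b ∧
  (∀ i j, i ≤ n+1 → j ≤ n+1 → i ≠ j → ρ i ≠ ρ j) ∧
  G.dir a (ρ 1) ∧ G.dir b (ρ n) ∧
  (∀ i, 1 ≤ i → i < n → G.undir (ρ i) (ρ (i+1))) ∧
  (∀ i j, i ≤ n+1 → j ≤ n+1 → G.Adj (ρ i) (ρ j) → j = i+1 ∨ i = j+1)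

/-- Complex-spouses of `a`. -/
def csp (G : ChainGraph V) (a : V) : Set V := {b | ∃ n ρ, G.IsMinimalComplex a b n ρ}

/-- The Markov blanket of `T`: parents, neighbours, children and complex-spouses of `T`. -/
def mb (G : ChainGraph V) (T : V) : Set V := G.pa T ∪ G.nb T ∪ G.ch T ∪ G.csp T

/-- A route in `G`: a sequence of `len + 1` vertices `vtx 0, …, vtx len`
(hence nonempty), each consecutive pair joined by an edge of `G`. -/
structure Route (G : ChainGraph V) where
  len : ℕ
  vtx : ℕ → V
  link : ∀ i, i < len → G.Adj (vtx i) (vtx (i+1))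

/-- The positions `a, …, b` of the route form a section: all steps inside are
undirected edges, and the run is maximal on both sides. -/
def Route.IsSection {G : ChainGraph V} (ω : Route G) (a b : ℕ) : Prop :=
  a ≤ b ∧ b ≤ ω.len ∧
  (∀ k, a ≤ k → k < b → G.undir (ω.vtx k) (ω.vtx (k+1))) ∧
  (0 < a → ¬ G.undir (ω.vtx (a-1)) (ω.vtx a)) ∧
  (b < ω.len → ¬ G.undir (ω.vtx b) (ω.vtx (b+1)))

/-- A collider section: a section which the route enters by an arrowhead at both
ends, i.e. `vtx (a-1) → vtx a − ⋯ − vtx b ← vtx (b+1)` occurs on the route. -/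
def Route.IsColliderSection {G : ChainGraph V} (ω : Route G) (a b : ℕ) : Prop :=
  ω.IsSection a b ∧ 0 < a ∧ b < ω.len ∧
  G.dir (ω.vtx (a-1)) (ω.vtx a) ∧ G.dir (ω.vtx (b+1)) (ω.vtx b)

/-- A route is active with respect to `Z` if every collider section of it
contains a vertex of `Z ∪ an(Z)` and no vertex of any non-collider section is in `Z`. -/
def Route.Active {G : ChainGraph V} (ω : Route G) (Z : Set V) : Prop :=
  (∀ a b, ω.IsColliderSection a b → ∃ k, a ≤ k ∧ k ≤ b ∧ ω.vtx k ∈ Z ∪ G.anc Z) ∧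
  (∀ a b, ω.IsSection a b → ¬ ω.IsColliderSection a b →
    ∀ k, a ≤ k → k ≤ b → ω.vtx k ∉ Z)

/-- A route is intercepted (blocked) by `Z` if it is not active with respect to `Z`. -/
def Route.Intercepted {G : ChainGraph V} (ω : Route G) (Z : Set V) : Prop :=
  ¬ ω.Active Z

/-- `X` and `Y` are c-separated given `Z`: every route between a vertex of `X`
and a vertex of `Y` is intercepted by `Z`. -/
def CSep (G : ChainGraph V) (X Y Z : Set V) : Prop :=
  ∀ ω : Route G,
    ((ω.vtx 0 ∈ X ∧ ω.vtx ω.len ∈ Y) ∨ (ω.vtx 0 ∈ Y ∧ ω.vtx ω.len ∈ X)) →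
    ω.Intercepted Z

/-- Moral graph adjacency: distinct `u`, `v` are adjacent in `G^m` iff they are
adjacent in `G` or are complex-spouses. -/
def MoralAdj (G : ChainGraph V) (u v : V) : Prop :=
  u ≠ v ∧ (G.dir u v ∨ G.dir v u ∨ G.undir u v ∨ u ∈ G.csp v ∨ v ∈ G.csp u)

/-- A set `A` is ancestral if it contains the boundary (parents and neighbours)
of each of its elements. -/
def Ancestral (G : ChainGraph V) (A : Set V) : Prop :=
  ∀ a ∈ A, ∀ u, (G.dir u a ∨ G.undir u a) → u ∈ A

/-- `An(A)`: the smallest ancestral set containing `A`. -/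
def An (G : ChainGraph V) (A : Set V) : Set V :=
  ⋂₀ {B : Set V | A ⊆ B ∧ G.Ancestral B}

/-- A minimal complex of the induced subgraph `G_A`: a minimal complex of `G`
all of whose vertices lie in `A`. -/
def IsMinimalComplexIn (G : ChainGraph V) (A : Set V) (a b : V) (n : ℕ) (ρ : ℕ → V) : Prop :=
  G.IsMinimalComplex a b n ρ ∧ ∀ i, i ≤ n+1 → ρ i ∈ A

/-- Adjacency in the moral graph `(G_A)^m` of the induced subgraph of `G` on `A`:
distinct `u, v ∈ A` joined by an edge of `G`, or complex-spouses in `G_A`. -/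
def MoralAdjIn (G : ChainGraph V) (A : Set V) (u v : V) : Prop :=
  u ∈ A ∧ v ∈ A ∧ u ≠ v ∧
    (G.dir u v ∨ G.dir v u ∨ G.undir u v ∨
      (∃ n ρ, G.IsMinimalComplexIn A u v n ρ) ∨ (∃ n ρ, G.IsMinimalComplexIn A v u n ρ))

end ChainGraph

/-- A path from `u` to `v` in an undirected graph with adjacency relation `R`:
a sequence of `n + 1 ≥ 2` distinct vertices `ρ 0 = u, …, ρ n = v` with each
consecutive pair adjacent. -/
def UPath {V : Type*} (R : V → V → Prop) (u v : V) (n : ℕ) (ρ : ℕ → V) : Prop :=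
  1 ≤ n ∧ ρ 0 = u ∧ ρ n = v ∧
  (∀ i j, i ≤ n → j ≤ n → i ≠ j → ρ i ≠ ρ j) ∧
  (∀ i, i < n → R (ρ i) (ρ (i+1)))

end LWF

namespace LWF


namespace ChainGraph

variable {V : Type*}

lemma adj_symm (G : ChainGraph V) {u v : V} (h : G.Adj u v) : G.Adj v u := by
  rcases h with h | h | h
  · exact Or.inr (Or.inl h)
  · exact Or.inl h
  · exact Or.inr (Or.inr (G.undir_symm _ _ h))

lemma adj_irrefl (G : ChainGraph V) (v : V) : ¬ G.Adj v v := by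
  rintro (h | h | h)
  · exact G.dir_irrefl v h
  · exact G.dir_irrefl v h
  · exact G.undir_irrefl v h

/-- There is no directed edge going backwards along an undirected walk. -/
lemma no_dir_back (G : ChainGraph V) :
    ∀ n (σ : ℕ → V), (∀ i, i < n → G.undir (σ i) (σ (i+1))) → ¬ G.dir (σ n) (σ 0) := by
  intro n
  induction n using Nat.strong_induction_on with
  | _ n IH =>
    intro σ hw hd
    rcases Nat.eq_zero_or_pos n with rfl | hn
    · exact G.dir_irrefl _ hd
    by_cases hrep : ∃ i j, i < j ∧ j ≤ n ∧ σ i = σ j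
    · obtain ⟨i, j, hij, hjn, heq⟩ := hrep
      have hd1 : 1 ≤ j - i := by omega
      set τ : ℕ → V := fun l => if l ≤ i then σ l else σ (l + (j - i)) with hτ
      have hτ1 : ∀ l, l ≤ i → τ l = σ l := by
        intro l hl
        simp only [hτ, if_pos hl]
      have hτ2 : ∀ l, i ≤ l → τ l = σ (l + (j - i)) := by
        intro l hl
        rcases eq_or_lt_of_le hl with hl' | hl'
        · simp only [hτ, if_pos (le_of_eq hl'.symm)]
          rw [← hl', heq]
          congr 1
          omega
        · simp only [hτ, if_neg (by omega : ¬ l ≤ i)]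
      refine IH (n - (j - i)) (by omega) τ ?_ ?_
      · intro k hk
        by_cases h2 : k < i
        · rw [hτ1 k (by omega), hτ1 (k + 1) (by omega)]
          exact hw k (by omega)
        · rw [hτ2 k (by omega), hτ2 (k + 1) (by omega)]
          have e : k + 1 + (j - i) = k + (j - i) + 1 := by omega
          rw [e]
          exact hw (k + (j - i)) (by omega)
      · rw [hτ2 (n - (j - i)) (by omega), hτ1 0 (Nat.zero_le i)]
        have e : n - (j - i) + (j - i) = n := by omega
        rw [e]
        exact hd
    · push_neg at hrep
      refine G.no_partially_directed_cycle (n + 1)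
        (fun l => if l = 0 then σ n else σ (l - 1)) (by omega) ?_ ?_ ?_ ⟨0, by omega, ?_⟩
      · simp only [if_neg (by omega : ¬ n + 1 = 0), if_pos rfl, Nat.add_sub_cancel,
          eq_self_iff_true, if_true]
      · intro i j hij hjn
        by_cases hi0 : i = 0
        · subst hi0
          simp only [if_pos rfl, if_neg (by omega : ¬ j = 0)]
          intro heq
          exact hrep (j - 1) n (by omega) le_rfl heq.symm
        · simp only [if_neg hi0, if_neg (by omega : ¬ j = 0)]
          exact hrep (i - 1) (j - 1) (by omega) (by omega)
      · intro i hi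
        by_cases hi0 : i = 0
        · subst hi0
          simp only [if_pos rfl, if_neg (by omega : ¬ (0:ℕ) + 1 = 0)]
          exact Or.inl hd
        · right
          simp only [if_neg hi0, if_neg (by omega : ¬ i + 1 = 0)]
          have e : i + 1 - 1 = (i - 1) + 1 := by omega
          rw [e]
          exact hw (i - 1) (by omega)
      · simp only [if_pos rfl, if_neg (by omega : ¬ (0:ℕ) + 1 = 0)]
        exact hd

/-- No partially directed cycle of the form `a → τ 1 − ⋯ − τ m → a`. -/
lemma no_two_dir (G : ChainGraph V) (a : V) (m : ℕ) (τ : ℕ → V)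
    (hm : 1 ≤ m)
    (h1 : G.dir a (τ 1))
    (hw : ∀ l, 1 ≤ l → l < m → G.undir (τ l) (τ (l+1)))
    (h2 : G.dir (τ m) a)
    (hdist : ∀ l l', 1 ≤ l → l < l' → l' ≤ m → τ l ≠ τ l')
    (hne : ∀ l, 1 ≤ l → l ≤ m → τ l ≠ a) : False := by
  refine G.no_partially_directed_cycle (m + 1)
    (fun l => if l = 0 ∨ l = m + 1 then a else τ l) (by omega) ?_ ?_ ?_ ⟨0, by omega, ?_⟩
  · simp
  · intro i j hij hjn
    have hj : ¬ (j = 0 ∨ j = m + 1) := by omega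
    by_cases hi0 : i = 0
    · subst hi0
      simp only [if_pos (Or.inl rfl), if_neg hj]
      exact fun heq => hne j (by omega) (by omega) heq.symm
    · have hi : ¬ (i = 0 ∨ i = m + 1) := by omega
      simp only [if_neg hi, if_neg hj]
      exact hdist i j (by omega) hij (by omega)
  · intro i hi
    by_cases hi0 : i = 0
    · subst hi0
      simp only [if_pos (Or.inl rfl), if_neg (by omega : ¬ ((0:ℕ) + 1 = 0 ∨ (0:ℕ) + 1 = m + 1))]
      exact Or.inl h1
    · have hi' : ¬ (i = 0 ∨ i = m + 1) := by omega
      by_cases him : i = m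
      · subst him
        simp only [if_neg hi', if_pos (Or.inr rfl)]
        exact Or.inl h2
      · simp only [if_neg hi', if_neg (by omega : ¬ (i + 1 = 0 ∨ i + 1 = m + 1))]
        exact Or.inr (hw i (by omega) (by omega))
  · simp only [if_pos (Or.inl rfl), if_neg (by omega : ¬ ((0:ℕ) + 1 = 0 ∨ (0:ℕ) + 1 = m + 1))]
    exact h1

/-- From a walk `T → σ 1 − ⋯ − σ r ← u` with `T` and `u` distinct and
non-adjacent one can extract a minimal complex, so `u` is a complex-spouse of `T`. -/
lemma csp_of_walk (G : ChainGraph V) (T u : V) (hTu : T ≠ u) (hnadj : ¬ G.Adj T u) :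
    ∀ r, ∀ σ : ℕ → V, 1 ≤ r → G.dir T (σ 1) →
      (∀ i, 1 ≤ i → i < r → G.undir (σ i) (σ (i+1))) →
      G.dir u (σ r) → u ∈ G.csp T := by
  intro r
  induction r using Nat.strong_induction_on with
  | _ r IH =>
    intro σ hr hT hw hu
    by_cases ha : ∃ j, 2 ≤ j ∧ j ≤ r ∧ G.dir T (σ j)
    · obtain ⟨j, hj2, hjr, hdTj⟩ := ha
      refine IH (r - (j - 1)) (by omega) (fun k => σ (k + (j - 1))) (by omega) ?_ ?_ ?_
      · show G.dir T (σ (1 + (j - 1)))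
        have e : 1 + (j - 1) = j := by omega
        rw [e]; exact hdTj
      · intro i hi1 hi2
        show G.undir (σ (i + (j - 1))) (σ (i + 1 + (j - 1)))
        have e : i + 1 + (j - 1) = i + (j - 1) + 1 := by omega
        rw [e]
        exact hw (i + (j - 1)) (by omega) (by omega)
      · show G.dir u (σ (r - (j - 1) + (j - 1)))
        have e : r - (j - 1) + (j - 1) = r := by omega
        rw [e]; exact hu
    by_cases hb : ∃ j, 1 ≤ j ∧ j < r ∧ G.dir u (σ j)
    · obtain ⟨j, hj1, hjr, hduj⟩ := hb
      exact IH j hjr σ hj1 hT (fun i hi1 hi2 => hw i hi1 (by omega)) hduj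
    by_cases hc : ∃ i j, 1 ≤ i ∧ i + 2 ≤ j ∧ j ≤ r ∧ G.undir (σ i) (σ j)
    · obtain ⟨i, j, hi1, hij, hjr, hun⟩ := hc
      set τ : ℕ → V := fun k => if k ≤ i then σ k else σ (k + (j - i - 1)) with hτ
      have hτ1 : ∀ l, l ≤ i → τ l = σ l := by
        intro l hl
        simp only [hτ, if_pos hl]
      have hτ2 : ∀ l, i < l → τ l = σ (l + (j - i - 1)) := by
        intro l hl
        simp only [hτ, if_neg (by omega : ¬ l ≤ i)]
      refine IH (r - (j - i - 1)) (by omega) τ (by omega) ?_ ?_ ?_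
      · rw [hτ1 1 hi1]
        exact hT
      · intro k hk1 hk2
        by_cases h2 : k < i
        · rw [hτ1 k (by omega), hτ1 (k + 1) (by omega)]
          exact hw k hk1 (by omega)
        · by_cases h3 : k = i
          · rw [hτ1 k (le_of_eq h3), hτ2 (k + 1) (by omega)]
            have e : k + 1 + (j - i - 1) = j := by omega
            rw [e, h3]
            exact hun
          · rw [hτ2 k (by omega), hτ2 (k + 1) (by omega)]
            have e : k + 1 + (j - i - 1) = k + (j - i - 1) + 1 := by omega
            rw [e]
            exact hw (k + (j - i - 1)) (by omega) (by omega)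
      · rw [hτ2 (r - (j - i - 1)) (by omega)]
        have e : r - (j - i - 1) + (j - i - 1) = r := by omega
        rw [e]; exact hu
    push_neg at ha hb hc
    -- the walk is now a minimal complex
    have hdistinct : ∀ i j, 1 ≤ i → i < j → j ≤ r → σ i ≠ σ j := by
      intro i j hi hij hjr heq
      rcases eq_or_lt_of_le hjr with hjr' | hjr'
      · subst hjr'
        exact hb i hi hij (by rw [heq]; exact hu)
      · exact hc i (j + 1) hi (by omega) (by omega) (by rw [heq]; exact hw j (by omega) hjr')
    have hneT : ∀ j, 1 ≤ j → j ≤ r → σ j ≠ T := by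
      intro j hj1 hjr heq
      rcases eq_or_lt_of_le hj1 with hj1' | hj1'
      · rw [← hj1'] at heq
        rw [heq] at hT
        exact G.dir_irrefl T hT
      · refine G.no_dir_back (j - 1) (fun l => σ (1 + l)) ?_ ?_
        · intro l hl
          beta_reduce
          have e : 1 + (l + 1) = 1 + l + 1 := by omega
          rw [e]
          exact hw (1 + l) (by omega) (by omega)
        · beta_reduce
          have e : 1 + (j - 1) = j := by omega
          rw [e, heq]
          exact hT
    have hneU : ∀ j, 1 ≤ j → j ≤ r → σ j ≠ u := by
      intro j hj1 hjr heq
      rcases eq_or_lt_of_le hjr with hjr' | hjr'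
      · subst hjr'
        rw [heq] at hu
        exact G.dir_irrefl u hu
      · refine G.no_dir_back (r - j) (fun l => σ (r - l)) ?_ ?_
        · intro l hl
          beta_reduce
          have e1 : r - l = (r - (l + 1)) + 1 := by omega
          rw [e1]
          exact G.undir_symm _ _ (hw (r - (l + 1)) (by omega) (by omega))
        · beta_reduce
          have e : r - (r - j) = j := by omega
          rw [e, heq]
          exact hu
    -- nonadjacency of non-consecutive vertices
    set ρ : ℕ → V := fun k => if k = 0 then T else if k ≤ r then σ k else u with hρ
    have hρ0 : ρ 0 = T := by simp [hρ]
    have hρlast : ρ (r + 1) = u := by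
      simp only [hρ, if_neg (by omega : ¬ r + 1 = 0), if_neg (by omega : ¬ r + 1 ≤ r)]
    have hρmid : ∀ k, 1 ≤ k → k ≤ r → ρ k = σ k := by
      intro k h1 h2
      simp only [hρ, if_neg (by omega : ¬ k = 0), if_pos h2]
    have hnAdj : ∀ i j, i + 2 ≤ j → j ≤ r + 1 → ¬ G.Adj (ρ i) (ρ j) := by
      intro i j hij hjr hadj
      by_cases hi0 : i = 0
      · subst hi0
        rw [hρ0] at hadj
        rcases eq_or_lt_of_le hjr with hjr' | hjr'
        · subst hjr'
          rw [hρlast] at hadj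
          exact hnadj hadj
        · rw [hρmid j (by omega) (by omega)] at hadj
          rcases hadj with h | h | h
          · exact ha j (by omega) (by omega) h
          · -- dir (σ j) T : partially directed cycle T → σ 1 − ⋯ − σ j → T
            exact G.no_two_dir T j σ (by omega) hT
              (fun l hl1 hl2 => hw l hl1 (by omega)) h
              (fun l l' hl hll' hl' => hdistinct l l' hl hll' (by omega))
              (fun l hl1 hl2 => hneT l hl1 (by omega))
          · -- undir T (σ j) : walk σ 1 − ⋯ − σ j − T against dir T (σ 1)
            refine G.no_dir_back j (fun l => if l < j then σ (1 + l) else T) ?_ ?_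
            · intro l hl
              by_cases h1 : l + 1 < j
              · simp only [if_pos (by omega : l < j), if_pos h1]
                have e : 1 + (l + 1) = 1 + l + 1 := by omega
                rw [e]
                exact hw (1 + l) (by omega) (by omega)
              · simp only [if_pos (by omega : l < j), if_neg h1]
                have e : 1 + l = j := by omega
                rw [e]
                exact G.undir_symm _ _ h
            · simp only [if_neg (lt_irrefl j), if_pos (by omega : 0 < j)]
              exact hT
      · have hi1 : 1 ≤ i := by omega
        rw [hρmid i hi1 (by omega)] at hadj
        rcases eq_or_lt_of_le hjr with hjr' | hjr'
        · subst hjr'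
          rw [hρlast] at hadj
          rcases hadj with h | h | h
          · -- dir (σ i) u : pdc u → σ r − ⋯ − σ i → u
            refine G.no_two_dir u (r + 1 - i) (fun l => σ (r + 1 - l)) (by omega) ?_ ?_ ?_ ?_ ?_
            · beta_reduce
              have e : r + 1 - 1 = r := by omega
              rw [e]; exact hu
            · intro l hl1 hl2
              beta_reduce
              have e : r + 1 - l = (r + 1 - (l + 1)) + 1 := by omega
              rw [e]
              exact G.undir_symm _ _ (hw (r + 1 - (l + 1)) (by omega) (by omega))
            · beta_reduce
              have e : r + 1 - (r + 1 - i) = i := by omega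
              rw [e]; exact h
            · intro l l' hl hll' hl'
              intro heq
              exact hdistinct (r + 1 - l') (r + 1 - l) (by omega) (by omega) (by omega) heq.symm
            · intro l hl1 hl2
              exact hneU (r + 1 - l) (by omega) (by omega)
          · exact hb i hi1 (by omega) h
          · -- undir (σ i) u : walk σ r − ⋯ − σ i − u against dir u (σ r)
            refine G.no_dir_back (r - i + 1) (fun l => if l ≤ r - i then σ (r - l) else u) ?_ ?_
            · intro l hl
              by_cases h1 : l + 1 ≤ r - i
              · simp only [if_pos (by omega : l ≤ r - i), if_pos h1]
                have e : r - l = (r - (l + 1)) + 1 := by omega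
                rw [e]
                exact G.undir_symm _ _ (hw (r - (l + 1)) (by omega) (by omega))
              · simp only [if_pos (by omega : l ≤ r - i), if_neg h1]
                have e : r - l = i := by omega
                rw [e]
                exact h
            · simp only [if_neg (by omega : ¬ r - i + 1 ≤ r - i),
                if_pos (by omega : (0:ℕ) ≤ r - i)]
              have e : r - 0 = r := by omega
              rw [e]
              exact hu
        · rw [hρmid j (by omega) (by omega)] at hadj
          rcases hadj with h | h | h
          · -- dir (σ i) (σ j)
            refine G.no_dir_back (j - i) (fun l => σ (j - l)) ?_ ?_
            · intro l hl
              beta_reduce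
              have e : j - l = (j - (l + 1)) + 1 := by omega
              rw [e]
              exact G.undir_symm _ _ (hw (j - (l + 1)) (by omega) (by omega))
            · beta_reduce
              have e1 : j - (j - i) = i := by omega
              have e2 : j - 0 = j := by omega
              rw [e1, e2]
              exact h
          · -- dir (σ j) (σ i)
            refine G.no_dir_back (j - i) (fun l => σ (i + l)) ?_ ?_
            · intro l hl
              beta_reduce
              have e : i + (l + 1) = i + l + 1 := by omega
              rw [e]
              exact hw (i + l) (by omega) (by omega)
            · beta_reduce
              have e1 : i + (j - i) = j := by omega
              have e2 : i + 0 = i := by omega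
              rw [e1, e2]
              exact h
          · exact hc i j hi1 hij (by omega) h
    have hρdist : ∀ i j, i < j → j ≤ r + 1 → ρ i ≠ ρ j := by
      intro i j hij hjr
      by_cases hi0 : i = 0
      · subst hi0
        rw [hρ0]
        rcases eq_or_lt_of_le hjr with hjr' | hjr'
        · subst hjr'
          rw [hρlast]
          exact hTu
        · rw [hρmid j (by omega) (by omega)]
          exact fun heq => hneT j (by omega) (by omega) heq.symm
      · rw [hρmid i (by omega) (by omega)]
        rcases eq_or_lt_of_le hjr with hjr' | hjr'
        · subst hjr'
          rw [hρlast]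
          exact hneU i (by omega) (by omega)
        · rw [hρmid j (by omega) (by omega)]
          exact hdistinct i j (by omega) hij (by omega)
    refine ⟨r, ρ, hr, hρ0, hρlast, ?_, ?_, ?_, ?_, ?_⟩
    · intro i j hi hj hij
      rcases lt_or_gt_of_ne hij with h | h
      · exact hρdist i j h hj
      · exact (hρdist j i h hi).symm
    · rw [hρmid 1 le_rfl hr]
      exact hT
    · rw [hρmid r hr le_rfl]
      exact hu
    · intro i hi1 hi2
      rw [hρmid i hi1 (by omega), hρmid (i + 1) (by omega) (by omega)]
      exact hw i hi1 hi2
    · intro i j hi hj hadj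
      rcases lt_trichotomy i j with h | h | h
      · rcases eq_or_lt_of_le (by omega : i + 1 ≤ j) with h' | h'
        · exact Or.inl h'.symm
        · exact absurd hadj (hnAdj i j (by omega) hj)
      · subst h
        exact absurd hadj (G.adj_irrefl _)
      · rcases eq_or_lt_of_le (by omega : j + 1 ≤ i) with h' | h'
        · exact Or.inr h'.symm
        · exact absurd (G.adj_symm hadj) (hnAdj j i (by omega) hi)

lemma mem_mb_of_adj (G : ChainGraph V) {T u : V} (h : G.Adj T u) : u ∈ G.mb T := by
  rcases h with h | h | h
  · exact Or.inl (Or.inr h)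
  · exact Or.inl (Or.inl (Or.inl h))
  · exact Or.inl (Or.inl (Or.inr (G.undir_symm _ _ h)))

lemma not_mem_mb_self (G : ChainGraph V) (T : V) : T ∉ G.mb T := by
  rintro (((h | h) | h) | ⟨n, ρc, h⟩)
  · exact G.dir_irrefl T h
  · exact G.undir_irrefl T h
  · exact G.dir_irrefl T h
  · exact h.2.2.2.1 0 (n + 1) (by omega) (by omega) (by omega) (h.2.1.trans h.2.2.1.symm)

/-- Existence of the section starting at position `p` of a route. -/
lemma exists_section (G : ChainGraph V) (ω : Route G) (p : ℕ) (hp : p ≤ ω.len)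
    (hleft : 0 < p → ¬ G.undir (ω.vtx (p - 1)) (ω.vtx p)) :
    ∃ b, p ≤ b ∧ ω.IsSection p b := by
  classical
  set P : ℕ → Prop := fun b => ∀ j, p ≤ j → j < b → G.undir (ω.vtx j) (ω.vtx (j+1)) with hP
  have hPp : P p := fun j h1 h2 => absurd (lt_of_le_of_lt h1 h2) (lt_irrefl _)
  set b := Nat.findGreatest P ω.len with hb
  have hpb : p ≤ b := Nat.le_findGreatest hp hPp
  have hble : b ≤ ω.len := Nat.findGreatest_le _
  have hrun : P b := Nat.findGreatest_spec hp hPp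
  have hright : b < ω.len → ¬ G.undir (ω.vtx b) (ω.vtx (b + 1)) := by
    intro hblt hun
    have hPb1 : P (b + 1) := by
      intro j h1 h2
      by_cases hjb : j = b
      · subst hjb; exact hun
      · exact hrun j h1 (by omega)
    have := Nat.le_findGreatest (by omega : b + 1 ≤ ω.len) hPb1
    omega
  exact ⟨b, hpb, hpb, hble, fun k h1 h2 => hrun k h1 h2, hleft, hright⟩

/-- Activeness is inherited by the suffix of a route starting where the route
does not arrive by an edge pointing forward or an undirected edge. -/
lemma suffix_active (G : ChainGraph V) (ω ω' : Route G) (Z : Set V) (p : ℕ)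
    (hp : p ≤ ω.len) (hlen : ω'.len = ω.len - p)
    (hv : ∀ i, ω'.vtx i = ω.vtx (p + i))
    (hedge : 0 < p → ¬ G.undir (ω.vtx (p - 1)) (ω.vtx p) ∧ ¬ G.dir (ω.vtx (p - 1)) (ω.vtx p))
    (h : ω.Active Z) : ω'.Active Z := by
  have hsec : ∀ a b, ω'.IsSection a b → ω.IsSection (p + a) (p + b) := by
    intro a b hs
    obtain ⟨hab, hble, hrun, hl, hr⟩ := hs
    refine ⟨by omega, by omega, ?_, ?_, ?_⟩
    · intro k h1 h2
      have hthis := hrun (k - p) (by omega) (by omega)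
      rw [hv, hv] at hthis
      have e1 : p + (k - p) = k := by omega
      have e2 : p + (k - p + 1) = k + 1 := by omega
      rw [e1, e2] at hthis
      exact hthis
    · intro hpa
      by_cases ha0 : a = 0
      · subst ha0
        have e : p + 0 - 1 = p - 1 := by omega
        rw [e]
        have e2 : p + 0 = p := by omega
        rw [e2]
        exact (hedge (by omega)).1
      · have e1 : p + a - 1 = p + (a - 1) := by omega
        rw [e1, ← hv, ← hv]
        have e2 : a = (a - 1) + 1 := by omega
        rw [e2] at hl ⊢
        intro hun
        exact hl (by omega) (by rw [← e2] at hun ⊢; exact hun)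
    · intro hpb
      have e : p + b + 1 = p + (b + 1) := by omega
      rw [e, ← hv, ← hv]
      exact hr (by omega)
  have hcol_to : ∀ a b, ω'.IsColliderSection a b → ω.IsColliderSection (p + a) (p + b) := by
    intro a b hcs
    obtain ⟨hs, ha, hblen, hdl, hdr⟩ := hcs
    refine ⟨hsec a b hs, by omega, by omega, ?_, ?_⟩
    · have e1 : p + a - 1 = p + (a - 1) := by omega
      rw [e1, ← hv, ← hv]
      exact hdl
    · have e : p + b + 1 = p + (b + 1) := by omega
      rw [e, ← hv, ← hv]
      exact hdr
  have hcol_from : ∀ a b, 0 < a → ω'.IsSection a b →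
      ω.IsColliderSection (p + a) (p + b) → ω'.IsColliderSection a b := by
    intro a b ha hs hcs
    obtain ⟨_, _, hblen, hdl, hdr⟩ := hcs
    refine ⟨hs, ha, by omega, ?_, ?_⟩
    · rw [hv, hv]
      have e1 : p + (a - 1) = p + a - 1 := by omega
      rw [e1]
      exact hdl
    · rw [hv, hv]
      have e : p + (b + 1) = p + b + 1 := by omega
      rw [e]
      exact hdr
  constructor
  · intro a b hcs
    obtain ⟨k, h1, h2, h3⟩ := h.1 (p + a) (p + b) (hcol_to a b hcs)
    refine ⟨k - p, by omega, by omega, ?_⟩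
    rw [hv]
    have e : p + (k - p) = k := by omega
    rw [e]
    exact h3
  · intro a b hs hnc k hk1 hk2
    have hsec' := hsec a b hs
    have hnc' : ¬ ω.IsColliderSection (p + a) (p + b) := by
      intro hc
      by_cases ha0 : a = 0
      · subst ha0
        obtain ⟨_, hpa, _, hdl, _⟩ := hc
        have hp0 : 0 < p := by omega
        have e : p + 0 - 1 = p - 1 := by omega
        rw [e] at hdl
        have e2 : p + 0 = p := by omega
        rw [e2] at hdl
        exact (hedge hp0).2 hdl
      · exact hnc (hcol_from a b (by omega) hs hc)
    have := h.2 (p + a) (p + b) hsec' hnc' (p + k) (by omega) (by omega)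
    rw [hv]
    exact this
  

/-- A section of the reversed route is a section of the route. -/
lemma rev_section (G : ChainGraph V) (ω ω' : Route G) (hlen : ω'.len = ω.len)
    (hv : ∀ i, i ≤ ω.len → ω'.vtx i = ω.vtx (ω.len - i))
    {a b : ℕ} (h : ω'.IsSection a b) : ω.IsSection (ω.len - b) (ω.len - a) := by
  obtain ⟨hab, hble, hrun, hl, hr⟩ := h
  rw [hlen] at hble
  refine ⟨by omega, by omega, ?_, ?_, ?_⟩
  · intro k h1 h2
    have hk1 : ω.len - k - 1 ≤ ω.len := by omega
    have := hrun (ω.len - k - 1) (by omega) (by omega)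
    rw [hv _ (by omega), hv _ (by omega)] at this
    have e1 : ω.len - (ω.len - k - 1) = k + 1 := by omega
    have e2 : ω.len - (ω.len - k - 1 + 1) = k := by omega
    rw [e1, e2] at this
    exact G.undir_symm _ _ this
  · intro hlb hun
    have hblt : b < ω'.len := by omega
    apply hr hblt
    rw [hv _ (by omega), hv _ (by omega)]
    have e : ω.len - (b + 1) = ω.len - b - 1 := by omega
    rw [e]
    exact G.undir_symm _ _ hun
  · intro hla hun
    have ha : 0 < a := by omega
    apply hl ha
    rw [hv _ (by omega), hv _ (by omega)]
    have e : ω.len - (a - 1) = ω.len - a + 1 := by omega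
    rw [e]
    exact G.undir_symm _ _ hun

lemma rev_collider (G : ChainGraph V) (ω ω' : Route G) (hlen : ω'.len = ω.len)
    (hv : ∀ i, i ≤ ω.len → ω'.vtx i = ω.vtx (ω.len - i))
    {a b : ℕ} (h : ω'.IsColliderSection a b) :
    ω.IsColliderSection (ω.len - b) (ω.len - a) := by
  obtain ⟨hs, ha, hblen, hdl, hdr⟩ := h
  have hab : a ≤ b := hs.1
  have hble : b ≤ ω.len := by have := hs.2.1; omega
  rw [hlen] at hblen
  refine ⟨G.rev_section ω ω' hlen hv hs, by omega, by omega, ?_, ?_⟩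
  · rw [hv _ (by omega), hv _ (by omega)] at hdr
    have e : ω.len - (b + 1) = ω.len - b - 1 := by omega
    rw [e] at hdr
    exact hdr
  · rw [hv _ (by omega), hv _ (by omega)] at hdl
    have e : ω.len - (a - 1) = ω.len - a + 1 := by omega
    rw [e] at hdl
    exact hdl

lemma rev_active (G : ChainGraph V) (ω ω' : Route G) (hlen : ω'.len = ω.len)
    (hv : ∀ i, i ≤ ω.len → ω'.vtx i = ω.vtx (ω.len - i))
    (Z : Set V) (h : ω.Active Z) : ω'.Active Z := by
  have hv' : ∀ i, i ≤ ω'.len → ω.vtx i = ω'.vtx (ω'.len - i) := by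
    intro i hi
    rw [hlen] at hi ⊢
    rw [hv (ω.len - i) (by omega)]
    have e : ω.len - (ω.len - i) = i := by omega
    rw [e]
  constructor
  · intro a b hcs
    have hab : a ≤ b := hcs.1.1
    have hble : b ≤ ω.len := by have := hcs.1.2.1; omega
    obtain ⟨k, h1, h2, h3⟩ := h.1 _ _ (G.rev_collider ω ω' hlen hv hcs)
    refine ⟨ω.len - k, by omega, by omega, ?_⟩
    rw [hv _ (by omega)]
    have e : ω.len - (ω.len - k) = k := by omega
    rw [e]
    exact h3
  · intro a b hs hnc k hk1 hk2
    have hab : a ≤ b := hs.1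
    have hble : b ≤ ω.len := by have := hs.2.1; omega
    have hsec' := G.rev_section ω ω' hlen hv hs
    have hnc' : ¬ ω.IsColliderSection (ω.len - b) (ω.len - a) := by
      intro hc
      have hc2 := G.rev_collider ω' ω (by omega) hv' hc
      rw [hlen] at hc2
      have e1 : ω.len - (ω.len - a) = a := by omega
      have e2 : ω.len - (ω.len - b) = b := by omega
      rw [e1, e2] at hc2
      exact hnc hc2
    have hgoal := h.2 _ _ hsec' hnc' (ω.len - k) (by omega) (by omega)
    rw [hv _ (by omega)]
    exact hgoal

/-- Main lemma: every route from `T` to a vertex outside `{T} ∪ Mb(T)` is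
blocked by `Mb(T)`. -/
lemma route_blocked (G : ChainGraph V) (T : V) :
    ∀ L (ω : Route G), ω.len = L → ω.vtx 0 = T →
      ω.vtx ω.len ∉ ({T} : Set V) ∪ G.mb T → ¬ ω.Active (G.mb T) := by
  intro L
  induction L using Nat.strong_induction_on with
  | _ L IH =>
    intro ω hL h0 hend hAct
    subst hL
    have hlen1 : 1 ≤ ω.len := by
      by_contra hcon
      have h00 : ω.len = 0 := by omega
      exact hend (by rw [h00, h0]; exact Or.inl rfl)
    have hv1Z : ω.vtx 1 ∈ G.mb T := by
      have hadj := ω.link 0 (by omega)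
      rw [h0] at hadj
      exact G.mem_mb_of_adj hadj
    by_cases hu01 : G.undir (ω.vtx 0) (ω.vtx 1)
    · obtain ⟨b, hpb, hsec⟩ := G.exists_section ω 0 (by omega)
        (fun hcon => absurd hcon (by omega))
      have hb1 : 1 ≤ b := by
        by_contra hbcon
        have hb0 : b = 0 := by omega
        subst hb0
        exact hsec.2.2.2.2 (by omega) hu01
      have hnc : ¬ ω.IsColliderSection 0 b := fun hc => absurd hc.2.1 (lt_irrefl 0)
      exact hAct.2 0 b hsec hnc 1 (by omega) hb1 hv1Z
    · obtain ⟨b, hpb, hsec⟩ := G.exists_section ω 1 hlen1 (fun _ => hu01)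
      by_cases hcol : ω.IsColliderSection 1 b
      · obtain ⟨_, _, hblen, hdl, hdr⟩ := hcol
        have hdl' : G.dir (ω.vtx 0) (ω.vtx 1) := hdl
        by_cases huT : ω.vtx (b + 1) = T
        · -- recurse on the suffix starting at b + 1
          set ω' : Route G := ⟨ω.len - (b + 1), fun i => ω.vtx (b + 1 + i), fun i hi => by
            beta_reduce
            have e : b + 1 + (i + 1) = (b + 1 + i) + 1 := by omega
            rw [e]
            exact ω.link (b + 1 + i) (by omega)⟩ with hω'
          have hedge : 0 < b + 1 →
              ¬ G.undir (ω.vtx (b + 1 - 1)) (ω.vtx (b + 1)) ∧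
              ¬ G.dir (ω.vtx (b + 1 - 1)) (ω.vtx (b + 1)) := by
            intro _
            have e : b + 1 - 1 = b := by omega
            rw [e]
            constructor
            · intro hun
              exact G.dir_not_undir _ _ hdr (G.undir_symm _ _ hun)
            · intro hd
              exact G.dir_asymm _ _ hdr hd
          have hact' : ω'.Active (G.mb T) :=
            G.suffix_active ω ω' (G.mb T) (b + 1) (by omega) rfl (fun i => rfl) hedge hAct
          refine IH (ω.len - (b + 1)) (by omega) ω' rfl ?_ ?_ hact'
          · show ω.vtx (b + 1 + 0) = T
            have e : b + 1 + 0 = b + 1 := by omega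
            rw [e]
            exact huT
          · show ω.vtx (b + 1 + (ω.len - (b + 1))) ∉ ({T} : Set V) ∪ G.mb T
            have e : b + 1 + (ω.len - (b + 1)) = ω.len := by omega
            rw [e]
            exact hend
        · have huZ : ω.vtx (b + 1) ∈ G.mb T := by
            by_cases hadj : G.Adj T (ω.vtx (b + 1))
            · exact G.mem_mb_of_adj hadj
            · refine Or.inr (G.csp_of_walk T (ω.vtx (b + 1))
                (fun heq => huT heq.symm) hadj b ω.vtx hpb ?_ hsec.2.2.1 hdr)
              rw [← h0]
              exact hdl'
          have hleft2 : 0 < b + 1 → ¬ G.undir (ω.vtx (b + 1 - 1)) (ω.vtx (b + 1)) := by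
            intro _
            have e : b + 1 - 1 = b := by omega
            rw [e]
            intro hun
            exact G.dir_not_undir _ _ hdr (G.undir_symm _ _ hun)
          obtain ⟨b2, hpb2, hsec2⟩ := G.exists_section ω (b + 1) (by omega) hleft2
          have hnc2 : ¬ ω.IsColliderSection (b + 1) b2 := by
            intro hc
            have hd2 := hc.2.2.2.1
            have e : b + 1 - 1 = b := by omega
            rw [e] at hd2
            exact G.dir_asymm _ _ hdr hd2
          exact hAct.2 (b + 1) b2 hsec2 hnc2 (b + 1) le_rfl hpb2 huZ
      · exact hAct.2 1 b hsec hcol 1 le_rfl hpb hv1Z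

end ChainGraph


/-- If a joint distribution `P` over variables indexed by `V`
satisfies the global Markov property with respect to the LWF chain graph `G`
(here abstracted by a conditional-independence relation `CI` on sets of
variables such that c-separation implies conditional independence for disjoint
sets), then `T` is conditionally independent of `V ∖ ({T} ∪ Mb(T))` given `Mb(T)`. -/
theorem markovBlanket_condIndep {V : Type*} [Fintype V] (G : ChainGraph V)
    (CI : Set V → Set V → Set V → Prop)
    (hGMP : ∀ A B S : Set V, Disjoint A B → Disjoint A S → Disjoint B S →
      G.CSep A B S → CI A B S)
    (T : V) :
    CI {T} (Set.univ \ ({T} ∪ G.mb T)) (G.mb T) := by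
  classical
  apply hGMP
  · rw [Set.disjoint_left]
    rintro a ha hB
    rw [Set.mem_singleton_iff] at ha
    subst ha
    exact hB.2 (Or.inl rfl)
  · rw [Set.disjoint_left]
    rintro a ha hZ
    rw [Set.mem_singleton_iff] at ha
    subst ha
    exact G.not_mem_mb_self a hZ
  · rw [Set.disjoint_left]
    rintro a ⟨_, ha⟩ hZ
    exact ha (Or.inr hZ)
  · intro ω hends
    rcases hends with ⟨h0, hl⟩ | ⟨h0, hl⟩
    · rw [Set.mem_singleton_iff] at h0
      exact ChainGraph.route_blocked G T ω.len ω rfl h0 hl.2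
    · intro hAct
      rw [Set.mem_singleton_iff] at hl
      set ω' : ChainGraph.Route G := ⟨ω.len, fun i => ω.vtx (ω.len - i), fun i hi => by
        beta_reduce
        have e : ω.len - i = (ω.len - (i + 1)) + 1 := by omega
        rw [e]
        exact G.adj_symm (ω.link (ω.len - (i + 1)) (by omega))⟩ with hω'
      have hv : ∀ i, i ≤ ω.len → ω'.vtx i = ω.vtx (ω.len - i) := fun i _ => rfl
      have hAct' := G.rev_active ω ω' rfl hv (G.mb T) hAct
      refine ChainGraph.route_blocked G T ω'.len ω' rfl ?_ ?_ hAct'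
      · show ω.vtx (ω.len - 0) = T
        have e : ω.len - 0 = ω.len := by omega
        rw [e]
        exact hl
      · show ω.vtx (ω.len - ω.len) ∉ ({T} : Set V) ∪ G.mb T
        have e : ω.len - ω.len = 0 := by omega
        rw [e]
        exact h0.2


end LWF
end

section
/- Let u→w−⋯−z←v be a minimal complex in an LWF chain graph G. Then u and v are non-adjacent in G, and for every set Z ⊆ V∖{u,v} that c-separates u and v, the set Z∪{w} does not c-separate u and v. -/
namespace LWF

/-- Let `u → w − ⋯ − z ← v` (with `w = ρ 1`) be a minimal
complex in an LWF chain graph `G`. Then `u` and `v` are non-adjacent in `G`,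
and for every set `Z ⊆ V ∖ {u, v}` that c-separates `u` and `v`, the set
`Z ∪ {w}` does not c-separate `u` and `v`. -/
theorem minimalComplex_unblock {V : Type*} [Fintype V] (G : ChainGraph V)
    (u v : V) (n : ℕ) (ρ : ℕ → V) (hc : G.IsMinimalComplex u v n ρ) :
    ¬ G.Adj u v ∧
    ∀ Z : Set V, u ∉ Z → v ∉ Z → G.CSep {u} {v} Z →
      ¬ G.CSep {u} {v} (Z ∪ {ρ 1}) := by
  obtain ⟨hn, h0, hN, hdist, hdu, hdv, hund, hind⟩ := hc
  have hnotuv : ¬ G.Adj u v := by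
    intro hadj
    have h : G.Adj (ρ 0) (ρ (n+1)) := by rw [h0, hN]; exact hadj
    rcases hind 0 (n+1) (by omega) (le_refl _) h with h' | h' <;> omega
  refine ⟨hnotuv, ?_⟩
  intro Z huZ hvZ _ hsep
  -- the edge facts
  have hnd01 : ¬ G.undir (ρ 0) (ρ 1) := by
    rw [h0]; exact G.dir_not_undir u (ρ 1) hdu
  have hndn : ¬ G.undir (ρ n) (ρ (n+1)) := by
    intro h
    exact G.dir_not_undir (ρ (n+1)) (ρ n) (by rw [hN]; exact hdv) (G.undir_symm _ _ h)
  have hlink : ∀ i, i < n+1 → G.Adj (ρ i) (ρ (i+1)) := by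
    intro i hi
    rcases Nat.eq_zero_or_pos i with h | h
    · subst h; left; rw [h0]; exact hdu
    · rcases Nat.lt_or_ge i n with h' | h'
      · exact Or.inr (Or.inr (hund i h h'))
      · have : i = n := by omega
        subst this
        exact Or.inr (Or.inl (by rw [hN]; exact hdv))
  let ω : G.Route := ⟨n+1, ρ, hlink⟩
  have hvtx : ω.vtx = ρ := rfl
  have hlen : ω.len = n+1 := rfl
  -- classification of sections
  have hsec : ∀ a b, ω.IsSection a b →
      (a = 0 ∧ b = 0) ∨ (a = 1 ∧ b = n) ∨ (a = n+1 ∧ b = n+1) := by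
    rintro a b ⟨hab, hb, hin, hl, hr⟩
    rw [hlen] at hb hr
    rw [hvtx] at hin hl hr
    rcases Nat.eq_zero_or_pos a with ha0 | ha0
    · subst ha0
      left
      refine ⟨rfl, ?_⟩
      by_contra hb0
      exact hnd01 (hin 0 (le_refl _) (by omega))
    · rcases Nat.lt_or_ge a (n+1) with han | han
      · -- 1 ≤ a ≤ n, show a = 1
        have ha1 : a = 1 := by
          by_contra ha1
          have h2 : 2 ≤ a := by omega
          have := hl (by omega)
          have hu := hund (a-1) (by omega) (by omega)
          rw [show a - 1 + 1 = a by omega] at hu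
          exact this hu
        subst ha1
        right; left
        refine ⟨rfl, ?_⟩
        have hbn : ¬ b = n + 1 := by
          intro hbe; subst hbe
          exact hndn (hin n (by omega) (by omega))
        have hbn' : ¬ b < n := by
          intro hblt
          exact hr (by omega) (hund b (by omega) hblt)
        omega
      · have : a = n+1 := by omega
        subst this
        right; right
        exact ⟨rfl, by omega⟩
  -- the middle section is a collider section
  have hcol : ω.IsColliderSection 1 n := by
    refine ⟨⟨hn, by rw [hlen]; omega, ?_, ?_, ?_⟩, by omega, by rw [hlen]; omega, ?_, ?_⟩
    · intro k hk hk'; exact hund k hk hk'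
    · intro _; rw [hvtx]; simpa using hnd01
    · intro _; rw [hvtx]; exact hndn
    · rw [hvtx]; simpa [h0] using hdu
    · rw [hvtx, hN]; exact hdv
  have hactive : ω.Active (Z ∪ {ρ 1}) := by
    constructor
    · intro a b hcs
      rcases hsec a b hcs.1 with ⟨ha, hb⟩ | ⟨ha, hb⟩ | ⟨ha, hb⟩
      · exact absurd hcs.2.1 (by omega)
      · subst ha; subst hb
        exact ⟨1, le_refl _, hn, Or.inl (Or.inr rfl)⟩
      · have := hcs.2.2.1
        rw [hlen] at this
        omega
    · intro a b hs hnc k hak hkb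
      rcases hsec a b hs with ⟨ha, hb⟩ | ⟨ha, hb⟩ | ⟨ha, hb⟩
      · subst ha; subst hb
        have hk0 : k = 0 := by omega
        subst hk0
        rw [hvtx, h0]
        rintro (h | h)
        · exact huZ h
        · exact hdist 0 1 (by omega) (by omega) (by omega) (by rw [h0]; exact h)
      · exact absurd hcol (by rw [ha, hb] at hnc; exact hnc)
      · subst ha; subst hb
        have hk : k = n+1 := by omega
        subst hk
        rw [hvtx, hN]
        rintro (h | h)
        · exact hvZ h
        · exact hdist (n+1) 1 (le_refl _) (by omega) (by omega) (by rw [hN]; exact h)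
  have := hsep ω (Or.inl ⟨by rw [hvtx, h0]; rfl, by rw [hvtx, hlen, hN]; rfl⟩)
  exact this hactive

end LWF
end

section
/- Let u and v be distinct non-adjacent vertices of an LWF chain graph G. Then u and v are non-adjacent in the moral graph (G_{An({u,v})})^m of the induced subgraph of G on the smallest ancestral set An({u,v}); in particular, there is no minimal complex u→w_1−⋯−w_r←v of G all of whose vertices lie in An({u,v}). -/
namespace LWF

namespace ChainGraph

variable {V : Type*}

/-- A single step: a forward directed edge or an undirected edge. -/
def Step (G : ChainGraph V) (x y : V) : Prop := G.dir x y ∨ G.undir x y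

/-- There is no closed walk of forward (directed/undirected) edges containing
a directed edge. -/
lemma no_pd_closed_walk (G : ChainGraph V) (m : ℕ) :
    ∀ (σ : ℕ → V), σ m = σ 0 → (∀ i, i < m → G.Step (σ i) (σ (i+1))) →
      ¬ ∃ i, i < m ∧ G.dir (σ i) (σ (i+1)) := by
  induction m using Nat.strong_induction_on with
  | _ m ih =>
    rintro σ hclosed hstep ⟨d, hd, hdir⟩
    match m, hd, hclosed, hstep, hdir with
    | 1, hd, hclosed, hstep, hdir =>
      interval_cases d
      rw [hclosed] at hdir
      exact G.dir_irrefl _ hdir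
    | (m+2), hd, hclosed, hstep, hdir =>
      set M := m + 2 with hM
      by_cases hdist : ∀ i j, i < j → j < M → σ i ≠ σ j
      · exact G.no_partially_directed_cycle M σ (by omega) hclosed hdist hstep
          ⟨d, hd, hdir⟩
      · push_neg at hdist
        obtain ⟨i, j, hij, hjM, heq⟩ := hdist
        by_cases hin : i ≤ d ∧ d < j
        · -- the directed edge lies on the inner closed walk σ i … σ j
          refine ih (j - i) (by omega) (fun t => σ (i + t)) ?_ ?_
            ⟨d - i, by omega, ?_⟩
          · show σ (i + (j - i)) = σ (i + 0)
            rw [show i + (j - i) = j by omega, Nat.add_zero]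
            exact heq.symm
          · intro t ht
            show G.Step (σ (i + t)) (σ (i + t + 1))
            exact hstep (i + t) (by omega)
          · show G.dir (σ (i + (d - i))) (σ (i + (d - i) + 1))
            rw [show i + (d - i) = d by omega]
            exact hdir
        · -- the directed edge lies on the outer closed walk
          set L := j - i with hL
          refine ih (M - L) (by omega)
            (fun t => if t ≤ i then σ t else σ (t + L)) ?_ ?_
            ⟨if d < i then d else d - L, ?_, ?_⟩
          · rw [if_neg (by omega : ¬ M - L ≤ i), if_pos (Nat.zero_le i),
              show M - L + L = M by omega]
            exact hclosed
          · intro t ht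
            rcases Nat.lt_trichotomy t i with h | h | h
            · rw [if_pos (by omega), if_pos (by omega)]
              exact hstep t (by omega)
            · subst h
              rw [if_pos le_rfl, if_neg (by omega), heq,
                show t + 1 + L = (t + L) + 1 by omega,
                show t + L = j by omega]
              exact hstep j (by omega)
            · rw [if_neg (by omega), if_neg (by omega),
                show t + 1 + L = (t + L) + 1 by omega]
              exact hstep (t + L) (by omega)
          · have hout : d < i ∨ j ≤ d := by
              by_contra hc
              push_neg at hc
              exact hin ⟨by omega, by omega⟩
            rcases hout with h | h
            · rw [if_pos h]; omega
            · rw [if_neg (by omega)]; omega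
          · by_cases hdi : d < i
            · rw [if_pos hdi, if_pos (by omega), if_pos (by omega)]
              exact hdir
            · -- here j ≤ d (since not in inner and not < i)
              have hjd : j ≤ d := by omega
              rw [if_neg hdi]
              rcases eq_or_lt_of_le hjd with h | h
              · rw [if_pos (by omega : d - L ≤ i), if_neg (by omega),
                  show d - L = i by omega,
                  show i + 1 + L = d + 1 by omega, heq, h]
                exact hdir
              · rw [if_neg (by omega), if_neg (by omega),
                  show d - L + L = d by omega,
                  show d - L + 1 + L = d + 1 by omega]
                exact hdir

/-- The set of vertices having a (possibly trivial) walk of forward edges to `Z`. -/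
def Reach (G : ChainGraph V) (Z : Set V) : Set V :=
  {x | ∃ (k : ℕ) (σ : ℕ → V), σ 0 = x ∧ σ k ∈ Z ∧
    ∀ i, i < k → G.Step (σ i) (σ (i+1))}

lemma An_subset_Reach (G : ChainGraph V) (Z : Set V) :
    G.An Z ⊆ G.Reach Z := by
  intro x hx
  refine hx (G.Reach Z) ⟨?_, ?_⟩
  · intro z hz
    exact ⟨0, fun _ => z, rfl, hz, fun i hi => absurd hi (Nat.not_lt_zero i)⟩
  · rintro a ⟨k, σ, h0, hk, hs⟩ w hw
    refine ⟨k + 1, fun t => match t with | 0 => w | s + 1 => σ s, rfl, hk, ?_⟩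
    rintro (_ | i) hi
    · show G.Step w (σ 0)
      rw [h0]; exact hw
    · exact hs i (by omega)

/-- Key lemma: there is no minimal complex `a → ρ 1 − ⋯ − ρ n ← b` with
`ρ 1` reaching `{a, b}` by a walk of forward edges. -/
lemma no_complex_of_reach (G : ChainGraph V) (a b : V) (n : ℕ) (ρ : ℕ → V)
    (hmc : G.IsMinimalComplex a b n ρ) (h1 : ρ 1 ∈ G.Reach {a, b}) : False := by
  obtain ⟨hn, hρ0, hρn1, hdist, hda, hdb, hund, hind⟩ := hmc
  obtain ⟨k, σ, hσ0, hσk, hσs⟩ := h1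
  rcases hσk with hk | hk
  · -- walk ends at a: closed walk a → ρ 1 ⋯ a
    refine G.no_pd_closed_walk (k + 1)
      (fun t => match t with | 0 => a | s + 1 => σ s) hk ?_ ⟨0, by omega, ?_⟩
    · rintro (_ | i) hi
      · show G.Step a (σ 0)
        rw [hσ0]; exact Or.inl hda
      · exact hσs i (by omega)
    · show G.dir a (σ 0)
      rw [hσ0]; exact hda
  · -- walk ends at b: closed walk ρ 1 ⋯ b → ρ n − ⋯ − ρ 1
    simp only [Set.mem_singleton_iff] at hk
    refine G.no_pd_closed_walk (k + n)
      (fun t => if t ≤ k then σ t else ρ (n + 1 + k - t)) ?_ ?_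
      ⟨k, by omega, ?_⟩
    · rw [if_neg (by omega : ¬ k + n ≤ k), if_pos (Nat.zero_le k),
        show n + 1 + k - (k + n) = 1 by omega, hσ0]
    · intro t ht
      rcases Nat.lt_trichotomy t k with h | h | h
      · rw [if_pos (by omega), if_pos (by omega)]
        exact hσs t h
      · subst h
        rw [if_pos le_rfl, if_neg (by omega), hk,
          show n + 1 + t - (t + 1) = n by omega]
        exact Or.inl hdb
      · rw [if_neg (by omega), if_neg (by omega)]
        have h1i : 1 ≤ n + k - t := by omega
        have h2i : n + k - t < n := by omega
        have e1 : n + 1 + k - t = (n + k - t) + 1 := by omega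
        have e2 : n + 1 + k - (t + 1) = n + k - t := by omega
        rw [e1, e2]
        exact Or.inr (G.undir_symm _ _ (hund (n + k - t) h1i h2i))
    · rw [if_pos le_rfl, if_neg (by omega), hk,
        show n + 1 + k - (k + 1) = n by omega]
      exact hdb

end ChainGraph

/-- If `u` and `v` are distinct non-adjacent vertices of an
LWF chain graph `G`, then `u` and `v` are non-adjacent in the moral graph
`(G_{An({u,v})})^m` of the induced subgraph of `G` on the smallest ancestral
set `An({u,v})`; in particular there is no minimal complex
`u → w₁ − ⋯ − w_r ← v` of `G` all of whose vertices lie in `An({u,v})`. -/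
theorem nonadj_nonadj_moral_an {V : Type*} [Fintype V] (G : ChainGraph V)
    (u v : V) (huv : u ≠ v) (hna : ¬ G.Adj u v) :
    ¬ G.MoralAdjIn (G.An {u, v}) u v ∧
    ¬ ∃ (n : ℕ) (ρ : ℕ → V), G.IsMinimalComplexIn (G.An {u, v}) u v n ρ := by
  have hsub : G.An {u, v} ⊆ G.Reach {u, v} := G.An_subset_Reach {u, v}
  have hnc1 : ¬ ∃ (n : ℕ) (ρ : ℕ → V),
      G.IsMinimalComplexIn (G.An {u, v}) u v n ρ := by
    rintro ⟨n, ρ, hmc, hmem⟩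
    exact G.no_complex_of_reach u v n ρ hmc (hsub (hmem 1 (by omega)))
  have hnc2 : ¬ ∃ (n : ℕ) (ρ : ℕ → V),
      G.IsMinimalComplexIn (G.An {u, v}) v u n ρ := by
    rintro ⟨n, ρ, hmc, hmem⟩
    have hpair : ({u, v} : Set V) = {v, u} := Set.pair_comm u v
    refine G.no_complex_of_reach v u n ρ hmc ?_
    have := hsub (hmem 1 (by omega))
    rwa [hpair] at this
  refine ⟨?_, hnc1⟩
  rintro ⟨-, -, -, h | h | h | h | h⟩
  · exact hna (Or.inl h)
  · exact hna (Or.inr (Or.inl h))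
  · exact hna (Or.inr (Or.inr h))
  · exact hnc1 h
  · exact hnc2 h

end LWF
end

section
/- Let u and v be distinct non-adjacent vertices of an LWF chain graph G, let H = (G_{An({u,v})})^m be the moral graph of the induced subgraph of G on the smallest ancestral set An({u,v}), and let S be the set of vertices adjacent to u in H. Then v ∉ S, S separates u from v in the undirected graph H (every path in H from u to v contains a vertex of S), and u and v are c-separated given S in G. -/
namespace LWF


section Aux

namespace ChainGraph

variable {V : Type*} (G : ChainGraph V)

/-- Boundary step relation: a directed or undirected edge. -/
def bdStep (x y : V) : Prop := G.dir x y ∨ G.undir x y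

variable {G}

lemma adj_symm_s10 {x y : V} (h : G.Adj x y) : G.Adj y x := by
  rcases h with h | h | h
  · exact Or.inr (Or.inl h)
  · exact Or.inl h
  · exact Or.inr (Or.inr (G.undir_symm _ _ h))

lemma adj_irrefl_s10 (x : V) : ¬ G.Adj x x := by
  rintro (h | h | h)
  · exact G.dir_irrefl _ h
  · exact G.dir_irrefl _ h
  · exact G.undir_irrefl _ h

lemma moralAdjIn_symm {A : Set V} {x y : V} (h : G.MoralAdjIn A x y) :
    G.MoralAdjIn A y x := by
  obtain ⟨hx, hy, hne, hd⟩ := h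
  refine ⟨hy, hx, hne.symm, ?_⟩
  rcases hd with h | h | h | h | h
  · exact Or.inr (Or.inl h)
  · exact Or.inl h
  · exact Or.inr (Or.inr (Or.inl (G.undir_symm _ _ h)))
  · exact Or.inr (Or.inr (Or.inr (Or.inr h)))
  · exact Or.inr (Or.inr (Or.inr (Or.inl h)))

/-- From any walk one can extract a walk with distinct vertices (same endpoints). -/
lemma exists_inj_walk (T : V → V → Prop) {x y : V}
    (h : ∃ (n : ℕ) (ρ : ℕ → V), ρ 0 = x ∧ ρ n = y ∧ ∀ i, i < n → T (ρ i) (ρ (i+1))) :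
    ∃ (n : ℕ) (ρ : ℕ → V), ρ 0 = x ∧ ρ n = y ∧ (∀ i, i < n → T (ρ i) (ρ (i+1))) ∧
      (∀ i j, i ≤ n → j ≤ n → i ≠ j → ρ i ≠ ρ j) := by
  classical
  obtain ⟨n0, hn0⟩ := h
  have hex : ∃ n, ∃ ρ : ℕ → V, ρ 0 = x ∧ ρ n = y ∧ ∀ i, i < n → T (ρ i) (ρ (i+1)) :=
    ⟨n0, hn0⟩
  obtain ⟨ρ, h0, hy, hstep⟩ := Nat.find_spec hex
  refine ⟨Nat.find hex, ρ, h0, hy, hstep, ?_⟩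
  set n := Nat.find hex with hn
  by_contra hcon
  push_neg at hcon
  obtain ⟨i, j, hi, hj, hij, heq⟩ := hcon
  wlog hlt : i < j generalizing i j
  · exact this j i hj hi hij.symm heq.symm (by omega)
  set m := n - (j - i) with hm
  have hmn : m < n := by omega
  have hw : ∃ ρ' : ℕ → V, ρ' 0 = x ∧ ρ' m = y ∧ ∀ k, k < m → T (ρ' k) (ρ' (k+1)) := by
    refine ⟨fun k => if k < i then ρ k else ρ (k + (j - i)), ?_, ?_, ?_⟩
    · show (if 0 < i then ρ 0 else ρ (0 + (j - i))) = x
      by_cases h0i : 0 < i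
      · rw [if_pos h0i]; exact h0
      · rw [if_neg h0i]
        have : i = 0 := by omega
        subst this
        rw [show (0 + (j - 0)) = j by omega, ← heq]; exact h0
    · show (if m < i then ρ m else ρ (m + (j - i))) = y
      rw [if_neg (by omega), show m + (j - i) = n by omega]; exact hy
    · intro k hk
      show T (if k < i then ρ k else ρ (k + (j - i)))
          (if k + 1 < i then ρ (k+1) else ρ (k + 1 + (j - i)))
      by_cases h1 : k + 1 < i
      · rw [if_pos (by omega), if_pos h1]
        exact hstep k (by omega)
      · by_cases h2 : k < i
        · have hki : k + 1 = i := by omega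
          rw [if_pos h2, if_neg (by omega), show k + 1 + (j - i) = j by omega, ← heq, ← hki]
          exact hstep k (by omega)
        · rw [if_neg h2, if_neg (by omega), show k + 1 + (j - i) = k + (j - i) + 1 by omega]
          exact hstep (k + (j - i)) (by omega)
  exact Nat.find_min hex hmn hw

/-- Wrapper around the no-partially-directed-cycle axiom. -/
lemma no_cycle' (n : ℕ) (σ : ℕ → V) (h2 : 2 ≤ n) (hcl : σ n = σ 0)
    (hdist : ∀ i j, i < j → j < n → σ i ≠ σ j)
    (hedge : ∀ i, i < n → G.dir (σ i) (σ (i+1)) ∨ G.undir (σ i) (σ (i+1)))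
    {i0 : ℕ} (hi0 : i0 < n) (hd : G.dir (σ i0) (σ (i0+1))) : False :=
  G.no_partially_directed_cycle n σ h2 hcl hdist hedge ⟨i0, hi0, hd⟩

/-- No closed partially directed walk: if there is a `bdStep`-walk from `x` to `y`
and a directed edge `y → x`, we get a contradiction. -/
lemma no_closed {x y : V}
    (h : ∃ (n : ℕ) (ρ : ℕ → V), ρ 0 = x ∧ ρ n = y ∧ ∀ i, i < n → G.bdStep (ρ i) (ρ (i+1)))
    (hd : G.dir y x) : False := by
  obtain ⟨n, ρ, h0, hy, hstep, hinj⟩ := exists_inj_walk G.bdStep h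
  rcases Nat.eq_zero_or_pos n with hn | hn
  · subst hn
    rw [h0] at hy
    exact G.dir_irrefl x (hy ▸ hd)
  · refine no_cycle' (G := G) (n+1) (fun i => if i = 0 then y else ρ (i-1)) (by omega) ?_ ?_ ?_
      (i0 := 0) (by omega) ?_
    · show (if n + 1 = 0 then y else ρ (n+1-1)) = (if 0 = 0 then y else _)
      rw [if_neg (by omega), if_pos rfl, show n+1-1 = n from rfl]; exact hy
    · intro i j hij hj
      show (if i = 0 then y else ρ (i-1)) ≠ (if j = 0 then y else ρ (j-1))
      by_cases hi : i = 0
      · subst hi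
        rw [if_pos rfl, if_neg (by omega)]
        intro hcon
        exact hinj (j-1) n (by omega) le_rfl (by omega) (by rw [← hcon, hy])
      · rw [if_neg hi, if_neg (by omega)]
        exact hinj (i-1) (j-1) (by omega) (by omega) (by omega)
    · intro i hi
      show G.dir (if i = 0 then y else ρ (i-1)) (if i+1 = 0 then y else ρ (i+1-1)) ∨
        G.undir (if i = 0 then y else ρ (i-1)) (if i+1 = 0 then y else ρ (i+1-1))
      by_cases h0' : i = 0
      · subst h0'
        rw [if_pos rfl, if_neg (by omega), show (0+1-1 : ℕ) = 0 from rfl, h0]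
        exact Or.inl hd
      · rw [if_neg h0', if_neg (by omega), show i+1-1 = (i-1)+1 by omega]
        exact hstep (i-1) (by omega)
    · show G.dir (if (0:ℕ) = 0 then y else ρ (0-1)) (if (0:ℕ)+1 = 0 then y else ρ (0+1-1))
      rw [if_pos rfl, if_neg (by omega), show (0+1-1 : ℕ) = 0 from rfl, h0]
      exact hd

lemma rtg_walk {T : V → V → Prop} {x y : V} (h : Relation.ReflTransGen T x y) :
    ∃ (n : ℕ) (ρ : ℕ → V), ρ 0 = x ∧ ρ n = y ∧ ∀ i, i < n → T (ρ i) (ρ (i+1)) := by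
  induction h with
  | refl => exact ⟨0, fun _ => x, rfl, rfl, by omega⟩
  | @tail b c hab hbc ih =>
    obtain ⟨n, ρ, h0, hy, hstep⟩ := ih
    refine ⟨n+1, fun i => if i ≤ n then ρ i else c, ?_, ?_, ?_⟩
    · show (if 0 ≤ n then ρ 0 else c) = x
      rw [if_pos (by omega)]; exact h0
    · show (if n+1 ≤ n then ρ (n+1) else c) = c
      rw [if_neg (by omega)]
    · intro i hi
      show T (if i ≤ n then ρ i else c) (if i+1 ≤ n then ρ (i+1) else c)
      by_cases h1 : i + 1 ≤ n
      · rw [if_pos (by omega), if_pos h1]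
        exact hstep i (by omega)
      · have hin : i = n := by omega
        subst hin
        rw [if_pos le_rfl, if_neg (by omega), hy]
        exact hbc

lemma rtg_no_closed {x y : V}
    (h : Relation.ReflTransGen G.bdStep x y) (hd : G.dir y x) : False :=
  no_closed (rtg_walk h) hd

lemma ancestral_An (A : Set V) : G.Ancestral (G.An A) := by
  intro a ha w hw
  intro B hB
  exact hB.2 a (ha B hB) w hw

lemma subset_An (A : Set V) : A ⊆ G.An A := fun _ hx B hB => hB.1 hx

lemma An_subset {A B : Set V} (h1 : A ⊆ B) (h2 : G.Ancestral B) : G.An A ⊆ B :=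
  fun x hx => hx B ⟨h1, h2⟩

/-- Walks of boundary steps into an ancestral set stay in the set. -/
lemma walk_mem_ancestral {A : Set V} (hA : G.Ancestral A) (n : ℕ) (ρ : ℕ → V)
    (hstep : ∀ i, i < n → G.bdStep (ρ i) (ρ (i+1))) (hlast : ρ n ∈ A) :
    ∀ i, i ≤ n → ρ i ∈ A := by
  have key : ∀ d i, i + d = n → ρ i ∈ A := by
    intro d
    induction d with
    | zero =>
      intro i hi
      have : i = n := by omega
      subst this; exact hlast
    | succ d ih =>
      intro i hi
      exact hA _ (ih (i+1) (by omega)) _ (hstep i (by omega))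
  intro i hi
  exact key (n - i) i (by omega)

lemma anc_subset_ancestral {A Z : Set V} (hA : G.Ancestral A) (hZ : Z ⊆ A) :
    G.anc Z ⊆ A := by
  rintro x ⟨z, hz, n, ρ, hn, h0, hlast, hdist, hstep, hdir⟩
  have := walk_mem_ancestral hA n ρ (fun i hi => hstep i hi) (hlast ▸ hZ hz) 0 (by omega)
  exact h0 ▸ this


lemma flag_moral {A : Set V} {p q : V} :
    ∀ (n : ℕ) (t : ℕ → V), 1 ≤ n → p ≠ q →
    t 0 = p → t (n+1) = q →
    (∀ i j, i ≤ n+1 → j ≤ n+1 → i ≠ j → t i ≠ t j) →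
    G.dir p (t 1) → G.dir q (t n) →
    (∀ i, 1 ≤ i → i < n → G.undir (t i) (t (i+1))) →
    (∀ i, i ≤ n+1 → t i ∈ A) →
    G.MoralAdjIn A p q := by
  intro n
  induction n using Nat.strong_induction_on with
  | _ n ih =>
  intro t hn hpq h0 hlast hdist hdp hdq hch hA
  by_cases hadj : G.Adj p q
  · refine ⟨h0 ▸ hA 0 (by omega), hlast ▸ hA (n+1) le_rfl, hpq, ?_⟩
    rcases hadj with h | h | h
    · exact Or.inl h
    · exact Or.inr (Or.inl h)
    · exact Or.inr (Or.inr (Or.inl h))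
  by_cases hind : ∀ i j, i ≤ n+1 → j ≤ n+1 → G.Adj (t i) (t j) → j = i+1 ∨ i = j+1
  · exact ⟨h0 ▸ hA 0 (by omega), hlast ▸ hA (n+1) le_rfl, hpq,
      Or.inr (Or.inr (Or.inr (Or.inl ⟨n, t,
        ⟨hn, h0, hlast, hdist, h0 ▸ hdp, hlast ▸ hdq, hch, hind⟩, hA⟩)))⟩
  push_neg at hind
  obtain ⟨i, j, hi, hj, hAdj, hcons⟩ := hind
  obtain ⟨hc1, hc2⟩ := hcons
  -- wlog i < j
  wlog hlt : i < j generalizing i j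
  · rcases Nat.lt_or_ge j i with h' | h'
    · exact this j i hj hi (adj_symm_s10 hAdj) hc2 hc1 h'
    · have : i = j := by omega
      subst this
      exact absurd hAdj (adj_irrefl_s10 _)
  -- Case split on position of the chord
  by_cases hi0 : i = 0
  · subst hi0
    by_cases hjn : j = n + 1
    · subst hjn
      rw [h0, hlast] at hAdj
      exact absurd hAdj hadj
    -- i = 0, 2 ≤ j ≤ n
    have hj2 : 2 ≤ j := by omega
    have hjn' : j ≤ n := by omega
    rcases hAdj with hd | hd | hd
    · -- dir (t 0) (t j) : shrink from the left
      rw [h0] at hd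
      refine ih (n - j + 1) (by omega) (fun k => if k = 0 then p else t (k + j - 1))
        (by omega) hpq (if_pos rfl) ?_ ?_ ?_ ?_ ?_ ?_
      · show (if n - j + 1 + 1 = 0 then p else t (n - j + 1 + 1 + j - 1)) = q
        rw [if_neg (by omega), show n - j + 1 + 1 + j - 1 = n + 1 by omega]
        exact hlast
      · intro a b ha hb hab
        show (if a = 0 then p else t (a + j - 1)) ≠ (if b = 0 then p else t (b + j - 1))
        by_cases ha0 : a = 0 <;> by_cases hb0 : b = 0
        · omega
        · rw [if_pos ha0, if_neg hb0, ← h0]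
          exact hdist 0 (b + j - 1) (by omega) (by omega) (by omega)
        · rw [if_neg ha0, if_pos hb0, ← h0]
          exact fun hcc => hdist 0 (a + j - 1) (by omega) (by omega) (by omega) hcc.symm
        · rw [if_neg ha0, if_neg hb0]
          exact hdist _ _ (by omega) (by omega) (by omega)
      · show G.dir p (if (1:ℕ) = 0 then p else t (1 + j - 1))
        rw [if_neg (by omega), show 1 + j - 1 = j by omega]
        exact hd
      · show G.dir q (if n - j + 1 = 0 then p else t (n - j + 1 + j - 1))
        rw [if_neg (by omega), show n - j + 1 + j - 1 = n by omega]
        exact hdq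
      · intro k hk1 hk2
        show G.undir (if k = 0 then p else t (k + j - 1)) (if k + 1 = 0 then p else t (k + 1 + j - 1))
        rw [if_neg (by omega), if_neg (by omega), show k + 1 + j - 1 = (k + j - 1) + 1 by omega]
        exact hch (k + j - 1) (by omega) (by omega)
      · intro k hk
        show (if k = 0 then p else t (k + j - 1)) ∈ A
        by_cases hk0 : k = 0
        · rw [if_pos hk0, ← h0]; exact hA 0 (by omega)
        · rw [if_neg hk0]; exact hA _ (by omega)
    · -- dir (t j) (t 0) : partially directed cycle p → t1 − ... − tj → p
      exact False.elim (by
        refine no_cycle' (G := G) (j+1) (fun k => if k ≤ j then t k else t 0) (by omega) ?_ ?_ ?_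
          (i0 := 0) (by omega) ?_
        · show (if j + 1 ≤ j then t (j+1) else t 0) = (if 0 ≤ j then t 0 else t 0)
          rw [if_neg (by omega), if_pos (by omega)]
        · intro a b hab hb
          show (if a ≤ j then t a else t 0) ≠ (if b ≤ j then t b else t 0)
          rw [if_pos (by omega), if_pos (by omega)]
          exact hdist a b (by omega) (by omega) (by omega)
        · intro k hk
          show G.dir (if k ≤ j then t k else t 0) (if k + 1 ≤ j then t (k+1) else t 0) ∨
            G.undir (if k ≤ j then t k else t 0) (if k + 1 ≤ j then t (k+1) else t 0)
          rw [if_pos (by omega)]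
          by_cases hkj : k + 1 ≤ j
          · rw [if_pos hkj]
            rcases Nat.eq_zero_or_pos k with hk0 | hk0
            · subst hk0; rw [h0]; exact Or.inl hdp
            · exact Or.inr (hch k (by omega) (by omega))
          · rw [if_neg hkj]
            have : k = j := by omega
            subst this
            exact Or.inl hd
        · show G.dir (if (0:ℕ) ≤ j then t 0 else t 0) (if (0:ℕ) + 1 ≤ j then t 1 else t 0)
          rw [if_pos (by omega), if_pos (by omega), h0]
          exact hdp)
    · -- undir (t 0) (t j) : same cycle with last edge undirected
      exact False.elim (by
        refine no_cycle' (G := G) (j+1) (fun k => if k ≤ j then t k else t 0) (by omega) ?_ ?_ ?_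
          (i0 := 0) (by omega) ?_
        · show (if j + 1 ≤ j then t (j+1) else t 0) = (if 0 ≤ j then t 0 else t 0)
          rw [if_neg (by omega), if_pos (by omega)]
        · intro a b hab hb
          show (if a ≤ j then t a else t 0) ≠ (if b ≤ j then t b else t 0)
          rw [if_pos (by omega), if_pos (by omega)]
          exact hdist a b (by omega) (by omega) (by omega)
        · intro k hk
          show G.dir (if k ≤ j then t k else t 0) (if k + 1 ≤ j then t (k+1) else t 0) ∨
            G.undir (if k ≤ j then t k else t 0) (if k + 1 ≤ j then t (k+1) else t 0)
          rw [if_pos (by omega)]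
          by_cases hkj : k + 1 ≤ j
          · rw [if_pos hkj]
            rcases Nat.eq_zero_or_pos k with hk0 | hk0
            · subst hk0; rw [h0]; exact Or.inl hdp
            · exact Or.inr (hch k (by omega) (by omega))
          · rw [if_neg hkj]
            have : k = j := by omega
            subst this
            exact Or.inr (G.undir_symm _ _ (h0 ▸ hd))
        · show G.dir (if (0:ℕ) ≤ j then t 0 else t 0) (if (0:ℕ) + 1 ≤ j then t 1 else t 0)
          rw [if_pos (by omega), if_pos (by omega), h0]
          exact hdp)
  -- now i ≥ 1
  have hi1 : 1 ≤ i := by omega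
  by_cases hjn : j = n + 1
  · subst hjn
    have hin : i ≤ n - 1 := by omega
    rcases hAdj with hd | hd | hd
    · -- dir (t i) q : cycle q → t n − ... − t i → q
      exact False.elim (by
        rw [hlast] at hd
        refine no_cycle' (G := G) (n + 2 - i)
          (fun k => if 1 ≤ k ∧ k ≤ n + 1 - i then t (n + 1 - k) else t (n+1)) (by omega) ?_ ?_ ?_
          (i0 := 0) (by omega) ?_
        · show (if 1 ≤ n + 2 - i ∧ n + 2 - i ≤ n + 1 - i then t (n + 1 - (n + 2 - i)) else t (n+1)) =
            (if 1 ≤ (0:ℕ) ∧ (0:ℕ) ≤ n + 1 - i then t (n + 1 - 0) else t (n+1))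
          rw [if_neg (by omega), if_neg (by omega)]
        · intro a b hab hb
          show (if 1 ≤ a ∧ a ≤ n + 1 - i then t (n + 1 - a) else t (n+1)) ≠
            (if 1 ≤ b ∧ b ≤ n + 1 - i then t (n + 1 - b) else t (n+1))
          by_cases ha' : 1 ≤ a ∧ a ≤ n + 1 - i
          · rw [if_pos ha', if_pos (by omega)]
            exact hdist _ _ (by omega) (by omega) (by omega)
          · rw [if_neg ha', if_pos (by omega)]
            exact fun hcc => hdist (n+1-b) (n+1) (by omega) (by omega) (by omega) hcc.symm
        · intro k hk
          by_cases hk0 : k = 0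
          · subst hk0
            show G.dir (if 1 ≤ (0:ℕ) ∧ (0:ℕ) ≤ n + 1 - i then t (n + 1 - 0) else t (n+1))
                (if 1 ≤ (0:ℕ)+1 ∧ (0:ℕ)+1 ≤ n + 1 - i then t (n + 1 - 1) else t (n+1)) ∨ _
            rw [if_neg (by omega), if_pos (by omega), hlast,
              show n + 1 - 1 = n from rfl]
            exact Or.inl hdq
          · show G.dir (if 1 ≤ k ∧ k ≤ n + 1 - i then t (n + 1 - k) else t (n+1))
                (if 1 ≤ k+1 ∧ k+1 ≤ n + 1 - i then t (n + 1 - (k+1)) else t (n+1)) ∨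
              G.undir (if 1 ≤ k ∧ k ≤ n + 1 - i then t (n + 1 - k) else t (n+1))
                (if 1 ≤ k+1 ∧ k+1 ≤ n + 1 - i then t (n + 1 - (k+1)) else t (n+1))
            rw [if_pos (by omega)]
            by_cases hk' : k + 1 ≤ n + 1 - i
            · rw [if_pos (by omega)]
              refine Or.inr (G.undir_symm _ _ ?_)
              rw [show n + 1 - k = (n + 1 - (k+1)) + 1 by omega]
              exact hch _ (by omega) (by omega)
            · rw [if_neg (by omega)]
              have : k = n + 1 - i := by omega
              subst this
              rw [show n + 1 - (n + 1 - i) = i by omega]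
              exact Or.inl (hlast ▸ hd)
        · show G.dir (if 1 ≤ (0:ℕ) ∧ (0:ℕ) ≤ n + 1 - i then t (n + 1 - 0) else t (n+1))
            (if 1 ≤ (0:ℕ)+1 ∧ (0:ℕ)+1 ≤ n + 1 - i then t (n + 1 - 1) else t (n+1))
          rw [if_neg (by omega), if_pos (by omega), hlast, show n + 1 - 1 = n from rfl]
          exact hdq)
    · -- dir q (t i) : shrink from the right
      rw [hlast] at hd
      refine ih i (by omega) (fun k => if k ≤ i then t k else q) (by omega) hpq ?_ ?_ ?_ ?_ ?_ ?_ ?_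
      · show (if (0:ℕ) ≤ i then t 0 else q) = p
        rw [if_pos (by omega)]; exact h0
      · show (if i + 1 ≤ i then t (i+1) else q) = q
        rw [if_neg (by omega)]
      · intro a b ha hb hab
        show (if a ≤ i then t a else q) ≠ (if b ≤ i then t b else q)
        by_cases ha' : a ≤ i <;> by_cases hb' : b ≤ i
        · rw [if_pos ha', if_pos hb']
          exact hdist a b (by omega) (by omega) hab
        · rw [if_pos ha', if_neg hb', ← hlast]
          exact hdist a (n+1) (by omega) (by omega) (by omega)
        · rw [if_neg ha', if_pos hb', ← hlast]
          exact fun hcc => hdist b (n+1) (by omega) (by omega) (by omega) hcc.symm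
        · omega
      · show G.dir p (if (1:ℕ) ≤ i then t 1 else q)
        rw [if_pos (by omega)]; exact hdp
      · show G.dir q (if i ≤ i then t i else q)
        rw [if_pos le_rfl]; exact hd
      · intro k hk1 hk2
        show G.undir (if k ≤ i then t k else q) (if k + 1 ≤ i then t (k+1) else q)
        rw [if_pos (by omega), if_pos (by omega)]
        exact hch k (by omega) (by omega)
      · intro k hk
        show (if k ≤ i then t k else q) ∈ A
        by_cases hk' : k ≤ i
        · rw [if_pos hk']; exact hA k (by omega)
        · rw [if_neg hk', ← hlast]; exact hA (n+1) le_rfl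
    · -- undir (t i) q : cycle q → t n − ... − t i − q
      exact False.elim (by
        rw [hlast] at hd
        refine no_cycle' (G := G) (n + 2 - i)
          (fun k => if 1 ≤ k ∧ k ≤ n + 1 - i then t (n + 1 - k) else t (n+1)) (by omega) ?_ ?_ ?_
          (i0 := 0) (by omega) ?_
        · show (if 1 ≤ n + 2 - i ∧ n + 2 - i ≤ n + 1 - i then t (n + 1 - (n + 2 - i)) else t (n+1)) =
            (if 1 ≤ (0:ℕ) ∧ (0:ℕ) ≤ n + 1 - i then t (n + 1 - 0) else t (n+1))
          rw [if_neg (by omega), if_neg (by omega)]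
        · intro a b hab hb
          show (if 1 ≤ a ∧ a ≤ n + 1 - i then t (n + 1 - a) else t (n+1)) ≠
            (if 1 ≤ b ∧ b ≤ n + 1 - i then t (n + 1 - b) else t (n+1))
          by_cases ha' : 1 ≤ a ∧ a ≤ n + 1 - i
          · rw [if_pos ha', if_pos (by omega)]
            exact hdist _ _ (by omega) (by omega) (by omega)
          · rw [if_neg ha', if_pos (by omega)]
            exact fun hcc => hdist (n+1-b) (n+1) (by omega) (by omega) (by omega) hcc.symm
        · intro k hk
          by_cases hk0 : k = 0
          · subst hk0
            show G.dir (if 1 ≤ (0:ℕ) ∧ (0:ℕ) ≤ n + 1 - i then t (n + 1 - 0) else t (n+1))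
                (if 1 ≤ (0:ℕ)+1 ∧ (0:ℕ)+1 ≤ n + 1 - i then t (n + 1 - 1) else t (n+1)) ∨ _
            rw [if_neg (by omega), if_pos (by omega), hlast, show n + 1 - 1 = n from rfl]
            exact Or.inl hdq
          · show G.dir (if 1 ≤ k ∧ k ≤ n + 1 - i then t (n + 1 - k) else t (n+1))
                (if 1 ≤ k+1 ∧ k+1 ≤ n + 1 - i then t (n + 1 - (k+1)) else t (n+1)) ∨
              G.undir (if 1 ≤ k ∧ k ≤ n + 1 - i then t (n + 1 - k) else t (n+1))
                (if 1 ≤ k+1 ∧ k+1 ≤ n + 1 - i then t (n + 1 - (k+1)) else t (n+1))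
            rw [if_pos (by omega)]
            by_cases hk' : k + 1 ≤ n + 1 - i
            · rw [if_pos (by omega)]
              refine Or.inr (G.undir_symm _ _ ?_)
              rw [show n + 1 - k = (n + 1 - (k+1)) + 1 by omega]
              exact hch _ (by omega) (by omega)
            · rw [if_neg (by omega)]
              have : k = n + 1 - i := by omega
              subst this
              rw [show n + 1 - (n + 1 - i) = i by omega]
              exact Or.inr (hlast ▸ hd)
        · show G.dir (if 1 ≤ (0:ℕ) ∧ (0:ℕ) ≤ n + 1 - i then t (n + 1 - 0) else t (n+1))
            (if 1 ≤ (0:ℕ)+1 ∧ (0:ℕ)+1 ≤ n + 1 - i then t (n + 1 - 1) else t (n+1))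
          rw [if_neg (by omega), if_pos (by omega), hlast, show n + 1 - 1 = n from rfl]
          exact hdq)
  -- now 1 ≤ i < j ≤ n, j ≥ i + 2
  have hjn' : j ≤ n := by omega
  have hij2 : i + 2 ≤ j := by omega
  rcases hAdj with hd | hd | hd
  · -- dir (t i) (t j) : cycle t i → t j − t (j-1) − ... − t i
    exact False.elim (by
      refine no_cycle' (G := G) (j - i + 1)
        (fun k => if k = 0 then t i else t (j + 1 - k)) (by omega) ?_ ?_ ?_
        (i0 := 0) (by omega) ?_
      · show (if j - i + 1 = 0 then t i else t (j + 1 - (j - i + 1))) = (if (0:ℕ) = 0 then t i else _)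
        rw [if_neg (by omega), if_pos rfl, show j + 1 - (j - i + 1) = i by omega]
      · intro a b hab hb
        show (if a = 0 then t i else t (j + 1 - a)) ≠ (if b = 0 then t i else t (j + 1 - b))
        by_cases ha0 : a = 0
        · rw [if_pos ha0, if_neg (by omega)]
          exact hdist i (j + 1 - b) (by omega) (by omega) (by omega)
        · rw [if_neg ha0, if_neg (by omega)]
          exact hdist _ _ (by omega) (by omega) (by omega)
      · intro k hk
        by_cases hk0 : k = 0
        · subst hk0
          show G.dir (if (0:ℕ) = 0 then t i else t (j + 1 - 0))
              (if (0:ℕ)+1 = 0 then t i else t (j + 1 - (0+1))) ∨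
            G.undir (if (0:ℕ) = 0 then t i else t (j + 1 - 0))
              (if (0:ℕ)+1 = 0 then t i else t (j + 1 - (0+1)))
          rw [if_pos rfl, if_neg (by omega), show j + 1 - (0+1) = j by omega]
          exact Or.inl hd
        · show G.dir (if k = 0 then t i else t (j + 1 - k))
              (if k+1 = 0 then t i else t (j + 1 - (k+1))) ∨
            G.undir (if k = 0 then t i else t (j + 1 - k))
              (if k+1 = 0 then t i else t (j + 1 - (k+1)))
          rw [if_neg hk0, if_neg (by omega)]
          refine Or.inr (G.undir_symm _ _ ?_)
          rw [show j + 1 - k = (j + 1 - (k+1)) + 1 by omega]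
          exact hch _ (by omega) (by omega)
      · show G.dir (if (0:ℕ) = 0 then t i else t (j + 1 - 0)) (if (0:ℕ)+1 = 0 then t i else t (j + 1 - (0+1)))
        rw [if_pos rfl, if_neg (by omega), show j + 1 - (0+1) = j by omega]
        exact hd)
  · -- dir (t j) (t i) : cycle t i − t (i+1) − ... − t j → t i
    exact False.elim (by
      refine no_cycle' (G := G) (j - i + 1)
        (fun k => if k ≤ j - i then t (i + k) else t i) (by omega) ?_ ?_ ?_
        (i0 := j - i) (by omega) ?_
      · show (if j - i + 1 ≤ j - i then t (i + (j - i + 1)) else t i) =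
          (if (0:ℕ) ≤ j - i then t (i + 0) else t i)
        rw [if_neg (by omega), if_pos (by omega), show i + 0 = i from rfl]
      · intro a b hab hb
        show (if a ≤ j - i then t (i + a) else t i) ≠ (if b ≤ j - i then t (i + b) else t i)
        rw [if_pos (by omega), if_pos (by omega)]
        exact hdist _ _ (by omega) (by omega) (by omega)
      · intro k hk
        show G.dir (if k ≤ j - i then t (i + k) else t i) (if k+1 ≤ j - i then t (i + (k+1)) else t i) ∨
          G.undir (if k ≤ j - i then t (i + k) else t i) (if k+1 ≤ j - i then t (i + (k+1)) else t i)
        rw [if_pos (by omega)]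
        by_cases hk' : k + 1 ≤ j - i
        · rw [if_pos hk', show i + (k+1) = (i + k) + 1 by omega]
          exact Or.inr (hch _ (by omega) (by omega))
        · rw [if_neg hk']
          have : k = j - i := by omega
          subst this
          rw [show i + (j - i) = j by omega]
          exact Or.inl hd
      · show G.dir (if j - i ≤ j - i then t (i + (j - i)) else t i)
          (if j - i + 1 ≤ j - i then t (i + (j - i + 1)) else t i)
        rw [if_pos le_rfl, if_neg (by omega), show i + (j - i) = j by omega]
        exact hd)
  · -- undir (t i) (t j) : shrink the middle
    refine ih (n - (j - i - 1)) (by omega)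
      (fun k => if k ≤ i then t k else t (k + (j - i - 1))) (by omega) hpq ?_ ?_ ?_ ?_ ?_ ?_ ?_
    · show (if (0:ℕ) ≤ i then t 0 else t (0 + (j - i - 1))) = p
      rw [if_pos (by omega)]; exact h0
    · show (if n - (j - i - 1) + 1 ≤ i then t (n - (j - i - 1) + 1)
        else t (n - (j - i - 1) + 1 + (j - i - 1))) = q
      rw [if_neg (by omega), show n - (j - i - 1) + 1 + (j - i - 1) = n + 1 by omega]
      exact hlast
    · intro a b ha hb hab
      show (if a ≤ i then t a else t (a + (j - i - 1))) ≠
        (if b ≤ i then t b else t (b + (j - i - 1)))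
      by_cases ha' : a ≤ i <;> by_cases hb' : b ≤ i
      · rw [if_pos ha', if_pos hb']; exact hdist a b (by omega) (by omega) hab
      · rw [if_pos ha', if_neg hb']; exact hdist _ _ (by omega) (by omega) (by omega)
      · rw [if_neg ha', if_pos hb']; exact hdist _ _ (by omega) (by omega) (by omega)
      · rw [if_neg ha', if_neg hb']; exact hdist _ _ (by omega) (by omega) (by omega)
    · show G.dir p (if (1:ℕ) ≤ i then t 1 else t (1 + (j - i - 1)))
      rw [if_pos (by omega)]; exact hdp
    · show G.dir q (if n - (j - i - 1) ≤ i then t (n - (j - i - 1))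
        else t (n - (j - i - 1) + (j - i - 1)))
      rw [if_neg (by omega), show n - (j - i - 1) + (j - i - 1) = n by omega]
      exact hdq
    · intro k hk1 hk2
      show G.undir (if k ≤ i then t k else t (k + (j - i - 1)))
        (if k + 1 ≤ i then t (k+1) else t (k + 1 + (j - i - 1)))
      by_cases hk' : k + 1 ≤ i
      · rw [if_pos (by omega), if_pos hk']
        exact hch k (by omega) (by omega)
      · by_cases hk'' : k ≤ i
        · have : k = i := by omega
          rw [if_pos hk'', if_neg hk', this, show i + 1 + (j - i - 1) = j by omega]
          exact hd
        · rw [if_neg hk'', if_neg hk', show k + 1 + (j - i - 1) = (k + (j - i - 1)) + 1 by omega]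
          exact hch _ (by omega) (by omega)
    · intro k hk
      show (if k ≤ i then t k else t (k + (j - i - 1))) ∈ A
      by_cases hk' : k ≤ i
      · rw [if_pos hk']; exact hA k (by omega)
      · rw [if_neg hk']; exact hA _ (by omega)

/-- Every position of a route lies in a section. -/
lemma sec_exists (ω : Route G) {k : ℕ} (hk : k ≤ ω.len) :
    ∃ a b, ω.IsSection a b ∧ a ≤ k ∧ k ≤ b := by
  classical
  have hPex : ∃ j, k + j = ω.len ∨ ¬ G.undir (ω.vtx (k+j)) (ω.vtx (k+j+1)) :=
    ⟨ω.len - k, Or.inl (by omega)⟩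
  have hQex : ∃ i, k - i = 0 ∨ ¬ G.undir (ω.vtx (k - i - 1)) (ω.vtx (k - i)) :=
    ⟨k, Or.inl (by omega)⟩
  set j0 := Nat.find hPex with hj0
  set i0 := Nat.find hQex with hi0
  have hmono : ∀ i, i ≤ j0 → k + i ≤ ω.len := by
    intro i
    induction i with
    | zero => intro _; omega
    | succ i ih =>
      intro h
      have h1 := ih (by omega)
      have h2 := Nat.find_min hPex (show i < j0 by omega)
      push_neg at h2
      omega
  have hundirR : ∀ i, i < j0 → G.undir (ω.vtx (k+i)) (ω.vtx (k+i+1)) := by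
    intro i hi
    have h2 := Nat.find_min hPex hi
    push_neg at h2
    exact h2.2
  have hstopR := Nat.find_spec hPex
  have hposL : ∀ i, i < i0 → 0 < k - i := by
    intro i hi
    have h2 := Nat.find_min hQex hi
    push_neg at h2
    omega
  have hundirL : ∀ i, i < i0 → G.undir (ω.vtx (k - i - 1)) (ω.vtx (k - i)) := by
    intro i hi
    have h2 := Nat.find_min hQex hi
    push_neg at h2
    exact h2.2
  have hstopL := Nat.find_spec hQex
  have hi0k : i0 ≤ k := by
    by_contra hcon
    have := hposL k (by omega)
    omega
  refine ⟨k - i0, k + j0, ⟨by omega, hmono j0 le_rfl, ?_, ?_, ?_⟩, by omega, by omega⟩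
  · intro m hm1 hm2
    rcases Nat.lt_or_ge m k with hmk | hmk
    · have hlt : k - m - 1 < i0 := by omega
      have := hundirL (k - m - 1) hlt
      rw [show k - (k - m - 1) - 1 = m by omega, show k - (k - m - 1) = m + 1 by omega] at this
      exact this
    · have := hundirR (m - k) (by omega)
      rw [show k + (m - k) = m by omega] at this
      exact this
  · intro hpos
    rcases hstopL with h | h
    · omega
    · exact h
  · intro hlt
    rcases hstopR with h | h
    · omega
    · exact h

/-- The section whose left end is a given position with a left stop. -/
lemma sec_at (ω : Route G) {k : ℕ} (hk : k ≤ ω.len)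
    (hstop : k = 0 ∨ ¬ G.undir (ω.vtx (k-1)) (ω.vtx k)) :
    ∃ b, ω.IsSection k b ∧ k ≤ b := by
  obtain ⟨a, b, hs, hak, hkb⟩ := sec_exists ω hk
  have hk0 : a = k := by
    by_contra hcon
    have halt : a < k := by omega
    have h1 : G.undir (ω.vtx (k-1)) (ω.vtx k) := by
      have := hs.2.2.1 (k-1) (by omega) (by omega)
      rw [show k - 1 + 1 = k by omega] at this
      exact this
    rcases hstop with h | h
    · omega
    · exact h h1
  exact ⟨b, hk0 ▸ hs, hk0 ▸ hkb⟩

/-- The section whose right end is a given position with a right stop. -/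
lemma sec_at' (ω : Route G) {k : ℕ} (hk : k ≤ ω.len)
    (hstop : k = ω.len ∨ ¬ G.undir (ω.vtx k) (ω.vtx (k+1))) :
    ∃ a, ω.IsSection a k ∧ a ≤ k := by
  obtain ⟨a, b, hs, hak, hkb⟩ := sec_exists ω hk
  have hk0 : b = k := by
    by_contra hcon
    have hblt : k < b := by omega
    have h1 : G.undir (ω.vtx k) (ω.vtx (k+1)) := hs.2.2.1 k (by omega) (by omega)
    rcases hstop with h | h
    · have := hs.2.1; omega
    · exact h h1
  exact ⟨a, hk0 ▸ hs, hk0 ▸ hak⟩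

/-- Membership in an ancestral set propagates along a section. -/
lemma sec_prop {A : Set V} (hA : G.Ancestral A) {ω : Route G} {a b : ℕ}
    (hs : ω.IsSection a b) (m m' : ℕ) (hm1 : a ≤ m) (hm2 : m ≤ b)
    (hm1' : a ≤ m') (hm2' : m' ≤ b) (h : ω.vtx m ∈ A) : ω.vtx m' ∈ A := by
  have hint := hs.2.2.1
  have down : ∀ d x, a ≤ x → x + d ≤ b → ω.vtx (x + d) ∈ A → ω.vtx x ∈ A := by
    intro d
    induction d with
    | zero => intro x _ _ hx; exact hx
    | succ d ih =>
      intro x hx1 hx2 hx3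
      have : ω.vtx (x + 1) ∈ A := by
        refine ih (x+1) (by omega) (by omega) ?_
        rw [show x + 1 + d = x + (d+1) by omega]
        exact hx3
      exact hA _ this _ (Or.inr (hint x (by omega) (by omega)))
  have up : ∀ d x, a ≤ x → x + d ≤ b → ω.vtx x ∈ A → ω.vtx (x + d) ∈ A := by
    intro d
    induction d with
    | zero => intro x _ _ hx; exact hx
    | succ d ih =>
      intro x hx1 hx2 hx3
      rw [show x + (d+1) = (x+1) + d by omega]
      refine ih (x+1) (by omega) (by omega) ?_
      exact hA _ hx3 _ (Or.inr (G.undir_symm _ _ (hint x (by omega) (by omega))))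
  rcases Nat.lt_or_ge m m' with hmm | hmm
  · have := up (m' - m) m hm1 (by omega) h
    rw [show m + (m' - m) = m' by omega] at this
    exact this
  · have := down (m - m') m' hm1' (by omega) ?_
    · exact this
    · rw [show m' + (m - m') = m by omega]
      exact h

section AllInA

variable {A : Set V} {ω : Route G}

/-- All vertices of a route with endpoints in an ancestral set `A`, all of whose
collider sections meet `A`, lie in `A`. -/
lemma route_mem_ancestral (hA : G.Ancestral A)
    (hu : ω.vtx 0 ∈ A) (hv : ω.vtx ω.len ∈ A)
    (hcol : ∀ a b, ω.IsColliderSection a b → ∃ k, a ≤ k ∧ k ≤ b ∧ ω.vtx k ∈ A) :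
    ∀ k, k ≤ ω.len → ω.vtx k ∈ A := by
  -- left claim: sections entered by an arrowhead at the right end (or ending the route)
  have claimL : ∀ a b, ω.IsSection a b →
      (b = ω.len ∨ G.dir (ω.vtx (b+1)) (ω.vtx b)) → ω.vtx b ∈ A := by
    intro a
    induction a using Nat.strong_induction_on with
    | _ a ih =>
    intro b hs hend
    have hab : a ≤ b := hs.1
    by_cases hblen : b = ω.len
    · exact hblen ▸ hv
    have hdir : G.dir (ω.vtx (b+1)) (ω.vtx b) := by
      rcases hend with h | h
      · exact absurd h hblen
      · exact h
    have hb : b ≤ ω.len := hs.2.1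
    by_cases ha0 : a = 0
    · exact sec_prop hA hs 0 b (by omega) (by omega) (by omega) (by omega) hu
    · have halen : a - 1 < ω.len := by omega
      have hnund : ¬ G.undir (ω.vtx (a-1)) (ω.vtx a) := hs.2.2.2.1 (by omega)
      rcases ω.link (a-1) halen with hd | hd | hd
      · rw [show a - 1 + 1 = a by omega] at hd
        -- collider section
        obtain ⟨m, hm1, hm2, hmA⟩ := hcol a b ⟨hs, by omega, by omega, hd, hdir⟩
        exact sec_prop hA hs m b hm1 hm2 (by omega) (by omega) hmA
      · rw [show a - 1 + 1 = a by omega] at hd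
        -- arrow out of the section at the left: recurse on the previous section
        obtain ⟨a', hs', ha'⟩ := sec_at' ω (k := a - 1) (by omega)
          (Or.inr (by rw [show a - 1 + 1 = a by omega]; exact hnund))
        have hprev : ω.vtx (a-1) ∈ A := by
          refine ih a' (by omega) (a-1) hs' (Or.inr ?_)
          rw [show a - 1 + 1 = a by omega]
          exact hd
        have haA : ω.vtx a ∈ A := hA _ hprev _ (Or.inl hd)
        exact sec_prop hA hs a b (by omega) (by omega) (by omega) (by omega) haA
      · rw [show a - 1 + 1 = a by omega] at hd
        exact absurd hd hnund
  have claimR : ∀ d b a, ω.len - b ≤ d → ω.IsSection a b →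
      (a = 0 ∨ G.dir (ω.vtx (a-1)) (ω.vtx a)) → ω.vtx a ∈ A := by
    intro d
    induction d with
    | zero =>
      intro b a hd hs hbeg
      have hab : a ≤ b := hs.1
      -- b = len
      have hb : b = ω.len := by have := hs.2.1; omega
      exact sec_prop hA hs b a (by omega) (by omega) (by omega) (by omega) (by rw [hb]; exact hv)
    | succ d ih =>
      intro b a hd hs hbeg
      have hab : a ≤ b := hs.1
      by_cases hblen : b = ω.len
      · exact sec_prop hA hs b a (by omega) (by omega) (by omega) (by omega) (by rw [hblen]; exact hv)
      by_cases ha0 : a = 0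
      · exact sec_prop hA hs 0 a (by omega) (by omega) (by omega) (by omega) hu
      have hdirL : G.dir (ω.vtx (a-1)) (ω.vtx a) := by
        rcases hbeg with h | h
        · exact absurd h ha0
        · exact h
      have hb : b ≤ ω.len := hs.2.1
      have hblt : b < ω.len := by omega
      have hnund : ¬ G.undir (ω.vtx b) (ω.vtx (b+1)) := hs.2.2.2.2 hblt
      rcases ω.link b hblt with hd' | hd' | hd'
      · -- arrow out at the right: recurse on next section
        obtain ⟨b₂, hs₂, hb₂⟩ := sec_at ω (k := b + 1) (by omega)
          (Or.inr (by rw [show b + 1 - 1 = b by omega]; exact (G.dir_not_undir _ _ hd')))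
        have hnext : ω.vtx (b+1) ∈ A := by
          refine ih b₂ (b+1) (by have := hs₂.2.1; omega) hs₂ (Or.inr ?_)
          rw [show b + 1 - 1 = b by omega]
          exact hd'
        have hbA : ω.vtx b ∈ A := hA _ hnext _ (Or.inl hd')
        exact sec_prop hA hs b a (by omega) (by omega) (by omega) (by omega) hbA
      · -- collider section
        obtain ⟨m, hm1, hm2, hmA⟩ := hcol a b ⟨hs, by omega, hblt, hdirL, hd'⟩
        exact sec_prop hA hs m a hm1 hm2 (by omega) (by omega) hmA
      · exact absurd hd' hnund
  intro k hk
  obtain ⟨a, b, hs, hak, hkb⟩ := sec_exists ω hk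
  have hab : a ≤ b := hs.1
  by_cases hblen : b = ω.len
  · exact sec_prop hA hs b k (by omega) (by omega) hak hkb (by rw [hblen]; exact hv)
  have hb : b ≤ ω.len := hs.2.1
  have hblt : b < ω.len := by omega
  have hnund : ¬ G.undir (ω.vtx b) (ω.vtx (b+1)) := hs.2.2.2.2 hblt
  rcases ω.link b hblt with hd | hd | hd
  · -- arrow out to the right
    obtain ⟨b₂, hs₂, hb₂⟩ := sec_at ω (k := b + 1) (by omega)
      (Or.inr (by rw [show b + 1 - 1 = b by omega]; exact (G.dir_not_undir _ _ hd)))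
    have hnext : ω.vtx (b+1) ∈ A := by
      refine claimR (ω.len - (b+1)) b₂ (b+1) (by have := hs₂.2.1; omega) hs₂ (Or.inr ?_)
      rw [show b + 1 - 1 = b by omega]
      exact hd
    have hbA : ω.vtx b ∈ A := hA _ hnext _ (Or.inl hd)
    exact sec_prop hA hs b k (by omega) (by omega) hak hkb hbA
  · have hbA := claimL a b hs (Or.inr hd)
    exact sec_prop hA hs b k (by omega) (by omega) hak hkb hbA
  · exact absurd hd hnund

end AllInA

/-- The two parents flanking a collider section are adjacent in the moral graph
(or equal). -/
lemma collider_bypass {A : Set V} {ω : Route G} {a b : ℕ} (hcol : ω.IsColliderSection a b)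
    (hallA : ∀ k, k ≤ ω.len → ω.vtx k ∈ A) (hpq : ω.vtx (a-1) ≠ ω.vtx (b+1)) :
    G.MoralAdjIn A (ω.vtx (a-1)) (ω.vtx (b+1)) := by
  obtain ⟨hs, ha0, hblen, hdp, hdq⟩ := hcol
  have hab : a ≤ b := hs.1
  have hble : b ≤ ω.len := hs.2.1
  -- prune the undirected chain from `vtx a` to `vtx b`, carrying membership in `A`
  have hchain : ∃ (n : ℕ) (ρ : ℕ → V), ρ 0 = ω.vtx a ∧ ρ n = ω.vtx b ∧
      ∀ i, i < n → (G.undir (ρ i) (ρ (i+1)) ∧ ρ i ∈ A ∧ ρ (i+1) ∈ A) := by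
    refine ⟨b - a, fun i => ω.vtx (a + i), rfl,
      (by show ω.vtx (a + (b - a)) = ω.vtx b; rw [show a + (b-a) = b by omega]), ?_⟩
    intro i hi
    show G.undir (ω.vtx (a+i)) (ω.vtx (a+(i+1))) ∧ ω.vtx (a+i) ∈ A ∧ ω.vtx (a+(i+1)) ∈ A
    refine ⟨?_, hallA _ (by omega), hallA _ (by omega)⟩
    rw [show a + (i+1) = (a + i) + 1 by omega]
    exact hs.2.2.1 (a+i) (by omega) (by omega)
  obtain ⟨n, ρ, h0, hlast, hstep, hinj⟩ :=
    exists_inj_walk (fun x y => G.undir x y ∧ x ∈ A ∧ y ∈ A) hchain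
  have hdp' : G.dir (ω.vtx (a-1)) (ρ 0) := h0 ▸ hdp
  have hdq' : G.dir (ω.vtx (b+1)) (ρ n) := hlast ▸ hdq
  have hmem : ∀ i, i ≤ n → ρ i ∈ A := by
    intro i hi
    rcases Nat.lt_or_ge i n with h | h
    · exact (hstep i h).2.1
    · have hin : i = n := by omega
      rw [hin]
      rcases Nat.eq_zero_or_pos n with h' | h'
      · subst h'
        rw [h0]
        exact hallA a (by omega)
      · have := (hstep (n-1) (by omega)).2.2
        rw [show n - 1 + 1 = n by omega] at this
        exact this
  -- the flanking parents are not on the chain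
  have hpnot : ∀ i, i ≤ n → ω.vtx (a-1) ≠ ρ i := by
    intro i hi hcon
    rcases Nat.eq_zero_or_pos i with h' | h'
    · subst h'
      exact G.dir_irrefl _ (hcon ▸ hdp')
    · refine no_cycle' (G := G) (i+1) (fun j => if j = 0 then ω.vtx (a-1) else ρ (j-1))
        (by omega) ?_ ?_ ?_ (i0 := 0) (by omega) ?_
      · show (if i + 1 = 0 then ω.vtx (a-1) else ρ (i+1-1)) = (if (0:ℕ) = 0 then ω.vtx (a-1) else ρ (0-1))
        rw [if_neg (by omega), if_pos rfl, show i+1-1 = i from rfl, ← hcon]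
      · intro x y hxy hy
        show (if x = 0 then ω.vtx (a-1) else ρ (x-1)) ≠ (if y = 0 then ω.vtx (a-1) else ρ (y-1))
        by_cases hx0 : x = 0
        · rw [if_pos hx0, if_neg (by omega), hcon]
          exact hinj i (y-1) (by omega) (by omega) (by omega)
        · rw [if_neg hx0, if_neg (by omega)]
          exact hinj (x-1) (y-1) (by omega) (by omega) (by omega)
      · intro j hj
        show G.dir (if j = 0 then ω.vtx (a-1) else ρ (j-1)) (if j+1 = 0 then ω.vtx (a-1) else ρ (j+1-1)) ∨
          G.undir (if j = 0 then ω.vtx (a-1) else ρ (j-1)) (if j+1 = 0 then ω.vtx (a-1) else ρ (j+1-1))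
        rw [if_neg (by omega : ¬ j+1 = 0), show j+1-1 = j from rfl]
        by_cases hj0 : j = 0
        · subst hj0
          rw [if_pos rfl]
          exact Or.inl hdp'
        · rw [if_neg hj0]
          have := (hstep (j-1) (by omega)).1
          rw [show j - 1 + 1 = j by omega] at this
          exact Or.inr this
      · show G.dir (if (0:ℕ) = 0 then ω.vtx (a-1) else ρ (0-1)) (if (0:ℕ)+1 = 0 then ω.vtx (a-1) else ρ (0+1-1))
        rw [if_pos rfl, if_neg (by omega), show (0:ℕ)+1-1 = 0 from rfl]
        exact hdp'
  have hqnot : ∀ i, i ≤ n → ω.vtx (b+1) ≠ ρ i := by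
    intro i hi hcon
    rcases Nat.eq_or_lt_of_le hi with h' | h'
    · subst h'
      exact G.dir_irrefl _ (hcon ▸ hdq')
    · refine no_cycle' (G := G) (n - i + 1) (fun j => if j = 0 then ω.vtx (b+1) else ρ (n + 1 - j))
        (by omega) ?_ ?_ ?_ (i0 := 0) (by omega) ?_
      · show (if n - i + 1 = 0 then ω.vtx (b+1) else ρ (n + 1 - (n - i + 1))) =
          (if (0:ℕ) = 0 then ω.vtx (b+1) else ρ (n + 1 - 0))
        rw [if_neg (by omega), if_pos rfl, show n + 1 - (n - i + 1) = i by omega, ← hcon]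
      · intro x y hxy hy
        show (if x = 0 then ω.vtx (b+1) else ρ (n + 1 - x)) ≠
          (if y = 0 then ω.vtx (b+1) else ρ (n + 1 - y))
        by_cases hx0 : x = 0
        · rw [if_pos hx0, if_neg (by omega), hcon]
          exact hinj i (n + 1 - y) (by omega) (by omega) (by omega)
        · rw [if_neg hx0, if_neg (by omega)]
          exact hinj (n + 1 - x) (n + 1 - y) (by omega) (by omega) (by omega)
      · intro j hj
        show G.dir (if j = 0 then ω.vtx (b+1) else ρ (n + 1 - j))
            (if j+1 = 0 then ω.vtx (b+1) else ρ (n + 1 - (j+1))) ∨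
          G.undir (if j = 0 then ω.vtx (b+1) else ρ (n + 1 - j))
            (if j+1 = 0 then ω.vtx (b+1) else ρ (n + 1 - (j+1)))
        rw [if_neg (by omega : ¬ j+1 = 0)]
        by_cases hj0 : j = 0
        · subst hj0
          rw [if_pos rfl, show n + 1 - (0+1) = n by omega]
          exact Or.inl hdq'
        · rw [if_neg hj0]
          refine Or.inr (G.undir_symm _ _ ?_)
          have := (hstep (n - j) (by omega)).1
          rw [show n - j + 1 = n + 1 - j by omega] at this
          rw [show n + 1 - (j + 1) = n - j by omega]
          exact this
      · show G.dir (if (0:ℕ) = 0 then ω.vtx (b+1) else ρ (n + 1 - 0))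
          (if (0:ℕ)+1 = 0 then ω.vtx (b+1) else ρ (n + 1 - (0+1)))
        rw [if_pos rfl, if_neg (by omega), show n + 1 - (0+1) = n by omega]
        exact hdq'
  -- assemble the flag configuration and conclude
  refine flag_moral (n+1)
    (fun k => if k = 0 then ω.vtx (a-1) else if k = n+2 then ω.vtx (b+1) else ρ (k-1))
    (by omega) hpq (if_pos rfl) ?_ ?_ ?_ ?_ ?_ ?_
  · show (if n+1+1 = 0 then ω.vtx (a-1) else if n+1+1 = n+2 then ω.vtx (b+1) else ρ (n+1+1-1)) = ω.vtx (b+1)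
    rw [if_neg (by omega), if_pos (by omega)]
  · intro x y hx hy hxy
    show (if x = 0 then ω.vtx (a-1) else if x = n+2 then ω.vtx (b+1) else ρ (x-1)) ≠
      (if y = 0 then ω.vtx (a-1) else if y = n+2 then ω.vtx (b+1) else ρ (y-1))
    by_cases hx0 : x = 0
    · rw [if_pos hx0]
      by_cases hy2 : y = n+2
      · rw [if_neg (by omega), if_pos hy2]
        exact hpq
      · rw [if_neg (by omega : ¬ y = 0), if_neg hy2]
        exact hpnot (y-1) (by omega)
    · by_cases hx2 : x = n+2
      · rw [if_neg hx0, if_pos hx2]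
        by_cases hy0 : y = 0
        · rw [if_pos hy0]
          exact fun h => hpq h.symm
        · rw [if_neg hy0, if_neg (by omega : ¬ y = n+2)]
          exact hqnot (y-1) (by omega)
      · rw [if_neg hx0, if_neg hx2]
        by_cases hy0 : y = 0
        · rw [if_pos hy0]
          exact fun h => hpnot (x-1) (by omega) h.symm
        · by_cases hy2 : y = n+2
          · rw [if_neg hy0, if_pos hy2]
            exact fun h => hqnot (x-1) (by omega) h.symm
          · rw [if_neg hy0, if_neg hy2]
            exact hinj (x-1) (y-1) (by omega) (by omega) (by omega)
  · show G.dir (ω.vtx (a-1)) (if (1:ℕ) = 0 then ω.vtx (a-1) else if (1:ℕ) = n+2 then ω.vtx (b+1) else ρ (1-1))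
    rw [if_neg (by omega), if_neg (by omega), show (1:ℕ)-1 = 0 from rfl]
    exact hdp'
  · show G.dir (ω.vtx (b+1)) (if n+1 = 0 then ω.vtx (a-1) else if n+1 = n+2 then ω.vtx (b+1) else ρ (n+1-1))
    rw [if_neg (by omega), if_neg (by omega), show n+1-1 = n from rfl]
    exact hdq'
  · intro i hi1 hi2
    show G.undir (if i = 0 then ω.vtx (a-1) else if i = n+2 then ω.vtx (b+1) else ρ (i-1))
      (if i+1 = 0 then ω.vtx (a-1) else if i+1 = n+2 then ω.vtx (b+1) else ρ (i+1-1))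
    rw [if_neg (by omega), if_neg (by omega), if_neg (by omega), if_neg (by omega),
      show i+1-1 = (i-1)+1 by omega]
    exact (hstep (i-1) (by omega)).1
  · intro i hi
    show (if i = 0 then ω.vtx (a-1) else if i = n+2 then ω.vtx (b+1) else ρ (i-1)) ∈ A
    by_cases hi0 : i = 0
    · rw [if_pos hi0]
      exact hallA (a-1) (by omega)
    by_cases hi2 : i = n+2
    · rw [if_neg hi0, if_pos hi2]
      exact hallA (b+1) (by omega)
    · rw [if_neg hi0, if_neg hi2]
      exact hmem (i-1) (by omega)

/-- Prepend a step to a moral walk. -/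
lemma walk_cons {S : Set V} {P : V → V → Prop} {x y z : V} {m : ℕ} {w : ℕ → V}
    (hw0 : w 0 = y) (hwm : w m = z) (hstep : ∀ i, i < m → P (w i) (w (i+1)))
    (hint : ∀ i, 0 < i → i < m → w i ∉ S) (hxy : P x y) (hyS : y ∉ S) :
    ∃ (m' : ℕ) (w' : ℕ → V), w' 0 = x ∧ w' m' = z ∧ (∀ i, i < m' → P (w' i) (w' (i+1))) ∧
      (∀ i, 0 < i → i < m' → w' i ∉ S) := by
  refine ⟨m+1, fun i => if i = 0 then x else w (i-1), if_pos rfl, ?_, ?_, ?_⟩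
  · show (if m+1 = 0 then x else w (m+1-1)) = z
    rw [if_neg (by omega), show m+1-1 = m from rfl]
    exact hwm
  · intro i hi
    show P (if i = 0 then x else w (i-1)) (if i+1 = 0 then x else w (i+1-1))
    rw [if_neg (by omega : ¬ i+1 = 0), show i+1-1 = i from rfl]
    by_cases hi0 : i = 0
    · subst hi0
      rw [if_pos rfl, hw0]
      exact hxy
    · rw [if_neg hi0]
      have := hstep (i-1) (by omega)
      rw [show i - 1 + 1 = i by omega] at this
      exact this
  · intro i hi1 hi2
    show (if i = 0 then x else w (i-1)) ∉ S
    rw [if_neg (by omega)]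
    rcases Nat.eq_or_lt_of_le (show 1 ≤ i by omega) with h | h
    · rw [← h, show (1:ℕ)-1 = 0 from rfl, hw0]
      exact hyS
    · exact hint (i-1) (by omega) (by omega)

/-- From a position in a non-collider section of an active route, there is a walk
in the moral graph to the end of the route avoiding `S` at interior vertices. -/
lemma active_walk {A S : Set V} {ω : Route G} (hact : ω.Active S)
    (hallA : ∀ k, k ≤ ω.len → ω.vtx k ∈ A) :
    ∀ d k, ω.len - k ≤ d → k ≤ ω.len →
    (∃ a b, ω.IsSection a b ∧ a ≤ k ∧ k ≤ b ∧ ¬ ω.IsColliderSection a b) →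
    ∃ (m : ℕ) (w : ℕ → V), w 0 = ω.vtx k ∧ w m = ω.vtx ω.len ∧
      (∀ i, i < m → (G.MoralAdjIn A (w i) (w (i+1)) ∨ w i = w (i+1))) ∧
      (∀ i, 0 < i → i < m → w i ∉ S) := by
  intro d
  induction d with
  | zero =>
    intro k hd hk _
    have : k = ω.len := by omega
    exact ⟨0, fun _ => ω.vtx k, rfl, by rw [this], by omega, by omega⟩
  | succ d ih =>
    intro k hd hk hsec
    by_cases hklen : k = ω.len
    · exact ⟨0, fun _ => ω.vtx k, rfl, by rw [hklen], by omega, by omega⟩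
    obtain ⟨a, b, hs, hak, hkb, hnc⟩ := hsec
    have hble : b ≤ ω.len := hs.2.1
    by_cases hkb' : k < b
    · -- undirected step inside the section
      have hund : G.undir (ω.vtx k) (ω.vtx (k+1)) := hs.2.2.1 k hak hkb'
      have hedge : G.MoralAdjIn A (ω.vtx k) (ω.vtx (k+1)) :=
        ⟨hallA k (by omega), hallA (k+1) (by omega),
          fun he => G.undir_irrefl _ (he ▸ hund), Or.inr (Or.inr (Or.inl hund))⟩
      have hnotS : ω.vtx (k+1) ∉ S := hact.2 a b hs hnc (k+1) (by omega) (by omega)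
      obtain ⟨m, w, hw0, hwm, hstep, hint⟩ :=
        ih (k+1) (by omega) (by omega) ⟨a, b, hs, by omega, by omega, hnc⟩
      exact walk_cons (P := fun x y => G.MoralAdjIn A x y ∨ x = y) hw0 hwm hstep hint (Or.inl hedge) hnotS
    · -- k = b : the right end of the section
      have hkb2 : k = b := by omega
      subst hkb2
      have hblen : k < ω.len := by omega
      have hnund : ¬ G.undir (ω.vtx k) (ω.vtx (k+1)) := hs.2.2.2.2 hblen
      obtain ⟨b₂, hs₂, hb₂⟩ := sec_at ω (k := k+1) (by omega)
        (Or.inr (by rw [show k + 1 - 1 = k from rfl]; exact hnund))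
      have hb₂le : b₂ ≤ ω.len := hs₂.2.1
      by_cases hcol2 : ω.IsColliderSection (k+1) b₂
      · -- bypass the collider section
        have hb₂len : b₂ < ω.len := hcol2.2.2.1
        have hdq : G.dir (ω.vtx (b₂+1)) (ω.vtx b₂) := hcol2.2.2.2.2
        have hnund₂ : ¬ G.undir (ω.vtx b₂) (ω.vtx (b₂+1)) := hs₂.2.2.2.2 hb₂len
        obtain ⟨b₃, hs₃, hb₃⟩ := sec_at ω (k := b₂+1) (by omega)
          (Or.inr (by rw [show b₂ + 1 - 1 = b₂ from rfl]; exact hnund₂))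
        have hnc₃ : ¬ ω.IsColliderSection (b₂+1) b₃ := by
          intro hc
          have := hc.2.2.2.1
          rw [show b₂ + 1 - 1 = b₂ from rfl] at this
          exact G.dir_asymm _ _ hdq this
        have hqS : ω.vtx (b₂+1) ∉ S := hact.2 _ _ hs₃ hnc₃ (b₂+1) le_rfl hb₃
        obtain ⟨m, w, hw0, hwm, hstep, hint⟩ :=
          ih (b₂+1) (by omega) (by omega) ⟨b₂+1, b₃, hs₃, le_rfl, hb₃, hnc₃⟩
        by_cases hpq : ω.vtx k = ω.vtx (b₂+1)
        · exact ⟨m, w, by rw [hw0, ← hpq], hwm, hstep, hint⟩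
        · have hedge₂ : G.MoralAdjIn A (ω.vtx k) (ω.vtx (b₂+1)) := by
            have := collider_bypass (A := A) hcol2 hallA
              (by rw [show k + 1 - 1 = k from rfl]; exact hpq)
            rw [show k + 1 - 1 = k from rfl] at this
            exact this
          exact walk_cons (P := fun x y => G.MoralAdjIn A x y ∨ x = y) hw0 hwm hstep hint (Or.inl hedge₂) hqS
      · -- step over the directed edge to the next (non-collider) section
        have hedge : G.MoralAdjIn A (ω.vtx k) (ω.vtx (k+1)) := by
          rcases ω.link k hblen with hd' | hd' | hd'
          · exact ⟨hallA k (by omega), hallA (k+1) (by omega),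
              fun he => G.dir_irrefl _ (he ▸ hd'), Or.inl hd'⟩
          · exact ⟨hallA k (by omega), hallA (k+1) (by omega),
              fun he => G.dir_irrefl _ (by rw [he] at hd'; exact hd'), Or.inr (Or.inl hd')⟩
          · exact absurd hd' hnund
        have hnotS : ω.vtx (k+1) ∉ S := hact.2 _ _ hs₂ hcol2 (k+1) le_rfl hb₂
        obtain ⟨m, w, hw0, hwm, hstep, hint⟩ :=
          ih (k+1) (by omega) (by omega) ⟨k+1, b₂, hs₂, le_rfl, hb₂, hcol2⟩
        exact walk_cons (P := fun x y => G.MoralAdjIn A x y ∨ x = y) hw0 hwm hstep hint (Or.inl hedge) hnotS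

/-- There is no walk in the moral graph from `u` to `v` avoiding the moral
neighbours of `u` at interior vertices, when `v` is not a moral neighbour of `u`. -/
lemma no_S_avoiding_walk {A : Set V} {u v : V} (huv : u ≠ v)
    (hvS : ¬ G.MoralAdjIn A u v) :
    ∀ (m : ℕ) (w : ℕ → V), w 0 = u → w m = v →
    (∀ i, i < m → (G.MoralAdjIn A (w i) (w (i+1)) ∨ w i = w (i+1))) →
    (∀ i, 0 < i → i < m → ¬ G.MoralAdjIn A u (w i)) → False := by
  intro m
  induction m with
  | zero =>
    intro w hw0 hwm _ _
    exact huv (hw0 ▸ hwm ▸ rfl)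
  | succ m ih =>
    intro w hw0 hwm hstep hint
    rcases hstep 0 (by omega) with hmor | heq
    · rw [hw0] at hmor
      rcases Nat.eq_zero_or_pos m with hm0 | hm0
      · subst hm0
        rw [hwm] at hmor
        exact hvS hmor
      · exact hint 1 (by omega) (by omega) hmor
    · refine ih (fun i => w (i+1)) ?_ hwm ?_ ?_
      · show w 1 = u
        rw [← heq, hw0]
      · intro i hi
        exact hstep (i+1) (by omega)
      · intro i hi1 hi2
        exact hint (i+1) (by omega) (by omega)

/-- Reversal of a moral walk. -/
lemma walk_reverse {A : Set V} {S : Set V} {m : ℕ} {w : ℕ → V}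
    (hstep : ∀ i, i < m → (G.MoralAdjIn A (w i) (w (i+1)) ∨ w i = w (i+1)))
    (hint : ∀ i, 0 < i → i < m → w i ∉ S) :
    (∀ i, i < m → (G.MoralAdjIn A ((fun j => w (m - j)) i) ((fun j => w (m - j)) (i+1)) ∨
      (fun j => w (m - j)) i = (fun j => w (m - j)) (i+1))) ∧
    (∀ i, 0 < i → i < m → (fun j => w (m - j)) i ∉ S) := by
  constructor
  · intro i hi
    show G.MoralAdjIn A (w (m - i)) (w (m - (i+1))) ∨ w (m - i) = w (m - (i+1))
    have := hstep (m - (i+1)) (by omega)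
    rw [show m - (i+1) + 1 = m - i by omega] at this
    rcases this with h | h
    · exact Or.inl (moralAdjIn_symm h)
    · exact Or.inr h.symm
  · intro i hi1 hi2
    exact hint (m - i) (by omega) (by omega)

/-- Non-adjacent vertices are not adjacent in the moral graph of `An {u,v}`. -/
lemma not_moral_uv {u v : V} (hna : ¬ G.Adj u v) :
    ¬ G.MoralAdjIn (G.An {u, v}) u v := by
  rintro ⟨hu, hv, hne, hcase⟩
  have hAW : G.An {u, v} ⊆
      {x | Relation.ReflTransGen G.bdStep x u ∨ Relation.ReflTransGen G.bdStep x v} := by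
    refine An_subset ?_ ?_
    · rintro x (rfl | rfl)
      · exact Or.inl Relation.ReflTransGen.refl
      · exact Or.inr Relation.ReflTransGen.refl
    · rintro a (ha | ha) w hw
      · exact Or.inl (Relation.ReflTransGen.head hw ha)
      · exact Or.inr (Relation.ReflTransGen.head hw ha)
  have key : ∀ x y : V, (∃ n ρ, G.IsMinimalComplexIn (G.An {u, v}) x y n ρ) →
      ((x = u ∧ y = v) ∨ (x = v ∧ y = u)) → False := by
    rintro x y ⟨n, ρ, ⟨hn, h0, hlast, hdist, hd1, hd2, hch, hind⟩, hmem⟩ hxy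
    have h1A := hmem 1 (by omega)
    have hchainRT : ∀ j, 1 ≤ j → j ≤ n → Relation.ReflTransGen G.bdStep (ρ j) (ρ 1) := by
      intro j
      induction j with
      | zero => omega
      | succ j ihj =>
        intro h1 h2
        rcases Nat.eq_zero_or_pos j with hj0 | hj0
        · subst hj0
          exact Relation.ReflTransGen.refl
        · refine Relation.ReflTransGen.head ?_ (ihj (by omega) (by omega))
          exact Or.inr (G.undir_symm _ _ (hch j (by omega) (by omega)))
    rcases hAW h1A with hW | hW
    · -- ρ 1 ⇝ u
      rcases hxy with ⟨rfl, rfl⟩ | ⟨rfl, rfl⟩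
      · exact rtg_no_closed hW hd1
      · exact rtg_no_closed ((hchainRT n (by omega) le_rfl).trans hW) hd2
    · -- ρ 1 ⇝ v
      rcases hxy with ⟨rfl, rfl⟩ | ⟨rfl, rfl⟩
      · exact rtg_no_closed ((hchainRT n (by omega) le_rfl).trans hW) hd2
      · exact rtg_no_closed hW hd1
  rcases hcase with h | h | h | h | h
  · exact hna (Or.inl h)
  · exact hna (Or.inr (Or.inl h))
  · exact hna (Or.inr (Or.inr h))
  · exact key u v h (Or.inl ⟨rfl, rfl⟩)
  · exact key v u h (Or.inr ⟨rfl, rfl⟩)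

end ChainGraph

end Aux



/-- Let `u` and `v` be distinct non-adjacent vertices of an
LWF chain graph `G`, let `H = (G_{An({u,v})})^m`, and let `S` be the set of
vertices adjacent to `u` in `H`. Then `v ∉ S`, `S` separates `u` from `v` in
the undirected graph `H` (every path in `H` from `u` to `v` contains a vertex
of `S`), and `u` and `v` are c-separated given `S` in `G`. -/
theorem moral_neighbours_separate {V : Type*} [Fintype V] (G : ChainGraph V)
    (u v : V) (huv : u ≠ v) (hna : ¬ G.Adj u v) :
    v ∉ {w | G.MoralAdjIn (G.An {u, v}) u w} ∧
    (∀ (n : ℕ) (ρ : ℕ → V), UPath (G.MoralAdjIn (G.An {u, v})) u v n ρ →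
      ∃ i, i ≤ n ∧ ρ i ∈ {w | G.MoralAdjIn (G.An {u, v}) u w}) ∧
    G.CSep {u} {v} {w | G.MoralAdjIn (G.An {u, v}) u w} := by
  classical
  set A := G.An {u, v} with hAdef
  have hA : G.Ancestral A := ChainGraph.ancestral_An _
  have hvS : ¬ G.MoralAdjIn A u v := ChainGraph.not_moral_uv hna
  refine ⟨hvS, ?_, ?_⟩
  · rintro n ρ ⟨hn, h0, hlast, hdist, hstep⟩
    refine ⟨1, by omega, ?_⟩
    have := hstep 0 (by omega)
    rw [h0] at this
    exact this
  · intro ω hend hact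
    have hSA : {w | G.MoralAdjIn A u w} ⊆ A := fun w hw => hw.2.1
    have hcolA : ∀ a b, ω.IsColliderSection a b → ∃ k, a ≤ k ∧ k ≤ b ∧ ω.vtx k ∈ A := by
      intro a b hc
      obtain ⟨k, hk1, hk2, hk3⟩ := hact.1 a b hc
      refine ⟨k, hk1, hk2, ?_⟩
      rcases hk3 with h | h
      · exact hSA h
      · exact ChainGraph.anc_subset_ancestral hA hSA h
    have hends : ω.vtx 0 ∈ A ∧ ω.vtx ω.len ∈ A := by
      rcases hend with ⟨h0, hl⟩ | ⟨h0, hl⟩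
      · rw [show ω.vtx 0 = u from h0, show ω.vtx ω.len = v from hl]
        exact ⟨ChainGraph.subset_An _ (by left; rfl), ChainGraph.subset_An _ (by right; rfl)⟩
      · rw [show ω.vtx 0 = v from h0, show ω.vtx ω.len = u from hl]
        exact ⟨ChainGraph.subset_An _ (by right; rfl), ChainGraph.subset_An _ (by left; rfl)⟩
    have hallA := ChainGraph.route_mem_ancestral hA hends.1 hends.2 hcolA
    obtain ⟨a, b, hs, ha, hb⟩ := ChainGraph.sec_exists ω (k := 0) (by omega)
    have hnc : ¬ ω.IsColliderSection a b := fun hc => by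
      have := hc.2.1
      omega
    obtain ⟨m, w, hw0, hwm, hstep, hint⟩ := ChainGraph.active_walk hact hallA
      ω.len 0 (by omega) (by omega) ⟨a, b, hs, by omega, hb, hnc⟩
    rcases hend with ⟨h0, hl⟩ | ⟨h0, hl⟩
    · exact ChainGraph.no_S_avoiding_walk huv hvS m w
        (by rw [hw0]; exact h0) (by rw [hwm]; exact hl) hstep hint
    · obtain ⟨hstep2, hint2⟩ := ChainGraph.walk_reverse (S := {w | G.MoralAdjIn A u w}) hstep hint
      exact ChainGraph.no_S_avoiding_walk huv hvS m (fun j => w (m - j))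
        (by show w (m - 0) = u; rw [Nat.sub_zero, hwm]; exact hl)
        (by show w (m - m) = v; rw [Nat.sub_self, hw0]; exact h0) hstep2 hint2


end LWF
end

section
/- Let G be an LWF chain graph, T ∈ V, and let S ⊆ V∖{T} be a set such that T is c-separated from every vertex of V∖({T}∪S) given S. Then Mb(T) ⊆ S. -/
namespace LWF

/-- If `S ⊆ V ∖ {T}` is a set such that `T` is c-separated
from every vertex of `V ∖ ({T} ∪ S)` given `S`, then `Mb(T) ⊆ S`. -/
theorem mb_subset_separator {V : Type*} [Fintype V] (G : ChainGraph V)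
    (T : V) (S : Set V) (hT : T ∉ S)
    (hsep : G.CSep {T} (Set.univ \ ({T} ∪ S)) S) :
    G.mb T ⊆ S := by
  intro x hx
  by_contra hxS
  -- Common argument: if T and x are adjacent and x ≠ T, we get a contradiction
  have key : G.Adj T x → x ≠ T → False := by
    intro hadj hne
    have hxmem : x ∈ Set.univ \ ({T} ∪ S) := by
      simp [hne, hxS]
    set ω : ChainGraph.Route G :=
      ⟨1, fun i => if i = 0 then T else x, by
        intro i hi
        have : i = 0 := by omega
        subst this
        simpa using hadj⟩ with hω
    have hint := hsep ω (Or.inl ⟨by simp [hω], by simpa [hω] using hxmem⟩)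
    apply hint
    constructor
    · intro a b hcol
      exfalso
      obtain ⟨⟨hab, hb1, _, _, _⟩, ha0, hbl, _, _⟩ := hcol
      simp only [hω] at hb1 hbl
      omega
    · intro a b hsec hncol k hak hkb hkS
      simp only [hω] at hkS
      by_cases hk0 : k = 0
      · subst hk0; simp at hkS; exact hT hkS
      · simp [hk0] at hkS; exact hxS hkS
  rcases hx with ((hpa | hnb) | hch) | hcsp
  · exact key (Or.inr (Or.inl hpa)) (fun h => G.dir_irrefl T (h ▸ hpa))
  · exact key (Or.inr (Or.inr (G.undir_symm _ _ hnb)))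
      (fun h => G.undir_irrefl T (h ▸ hnb))
  · exact key (Or.inl hch) (fun h => G.dir_irrefl T (h ▸ hch))
  -- complex-spouse case
  obtain ⟨n, ρ, h1n, hρ0, hρn1, hdist, hdTa, hdbx, hund, hind⟩ := hcsp
  have hdir0 : G.dir (ρ 0) (ρ 1) := by rw [hρ0]; exact hdTa
  have hdirn : G.dir (ρ (n+1)) (ρ n) := by rw [hρn1]; exact hdbx
  have hnu0 : ¬ G.undir (ρ 0) (ρ 1) := G.dir_not_undir _ _ hdir0
  have hnun : ¬ G.undir (ρ n) (ρ (n+1)) := fun h =>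
    G.dir_not_undir _ _ hdirn (G.undir_symm _ _ h)
  have hρnT : ρ n ≠ T := by
    intro h
    exact hdist 0 n (by omega) (by omega) (by omega) (by rw [hρ0, h])
  have hxT : x ≠ T := by
    intro h
    exact hdist 0 (n+1) (by omega) (by omega) (by omega) (by rw [hρ0, hρn1, h])
  -- Step 1: some middle vertex is in S
  have hstep1 : ∃ k, 1 ≤ k ∧ k ≤ n ∧ ρ k ∈ S := by
    by_contra hnoS
    push_neg at hnoS
    set ω₂ : ChainGraph.Route G :=
      ⟨n, ρ, by
        intro i hi
        by_cases hi0 : i = 0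
        · subst hi0; exact Or.inl hdir0
        · exact Or.inr (Or.inr (hund i (by omega) hi))⟩ with hω₂
    have hρnS : ρ n ∉ S := hnoS n h1n le_rfl
    have hint := hsep ω₂ (Or.inl ⟨by simp [hω₂, hρ0], by simp [hω₂, hρnT, hρnS]⟩)
    apply hint
    constructor
    · intro a b hcol
      exfalso
      obtain ⟨⟨hab, hbn, hintd, _, _⟩, ha0, hbl, hd1, hd2⟩ := hcol
      simp only [hω₂] at hbn hbl hd1 hd2
      by_cases hb0 : b = 0
      · omega
      · exact G.dir_not_undir _ _ hd2
          (G.undir_symm _ _ (hund b (by omega) (by omega)))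
    · intro a b hsec hncol k hak hkb hkS
      obtain ⟨hab, hbn, _, _, _⟩ := hsec
      simp only [hω₂] at hbn hkS
      by_cases hk0 : k = 0
      · subst hk0; rw [hρ0] at hkS; exact hT hkS
      · exact hnoS k (by omega) (by omega) hkS
  obtain ⟨k₀, hk₀1, hk₀n, hk₀S⟩ := hstep1
  -- Step 2: the full complex route is active, contradiction
  set ω₃ : ChainGraph.Route G :=
    ⟨n+1, ρ, by
      intro i hi
      by_cases hi0 : i = 0
      · subst hi0; exact Or.inl hdir0
      · by_cases hin : i = n
        · subst hin; exact Or.inr (Or.inl hdirn)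
        · exact Or.inr (Or.inr (hund i (by omega) (by omega)))⟩ with hω₃
  -- characterization of sections meeting the middle
  have hsecchar : ∀ a b, ω₃.IsSection a b → ∀ k, a ≤ k → k ≤ b → 1 ≤ k → k ≤ n →
      a = 1 ∧ b = n := by
    intro a b hsec k hak hkb hk1 hkn
    obtain ⟨hab, hb, hintd, hml, hmr⟩ := hsec
    simp only [hω₃] at hb hintd hml hmr
    have ha1 : a = 1 := by
      by_contra ha1
      by_cases ha0 : a = 0
      · exact hnu0 (hintd 0 (by omega) (by omega))
      · have h := hund (a-1) (by omega) (by omega)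
        rw [Nat.sub_add_cancel (by omega)] at h
        exact hml (by omega) h
    have hbn : b = n := by
      by_cases hbn1 : b = n + 1
      · exact absurd (hintd n (by omega) (by omega)) hnun
      · by_contra hbn
        exact hmr (by omega) (hund b (by omega) (by omega))
    exact ⟨ha1, hbn⟩
  have hint := hsep ω₃ (Or.inl ⟨by simp [hω₃, hρ0], by
    simp only [hω₃]
    rw [hρn1]
    simp [hxT, hxS]⟩)
  apply hint
  constructor
  · intro a b hcol
    obtain ⟨hsec, ha0, hbl, hd1, hd2⟩ := hcol
    have hab : a ≤ b := hsec.1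
    have hbn1 : b ≤ n + 1 := hsec.2.1
    simp only [hω₃] at hbl
    obtain ⟨ha1, hbn⟩ := hsecchar a b hsec a le_rfl hab (by omega) (by omega)
    exact ⟨k₀, by omega, by omega, Or.inl hk₀S⟩
  · intro a b hsec hncol k hak hkb hkS
    have hbn1 : b ≤ n + 1 := hsec.2.1
    simp only [hω₃] at hbn1 hkS
    by_cases hk0 : k = 0
    · subst hk0; rw [hρ0] at hkS; exact hT hkS
    by_cases hkn1 : k = n + 1
    · subst hkn1; rw [hρn1] at hkS; exact hxS hkS
    obtain ⟨ha1, hbn⟩ := hsecchar a b hsec k hak hkb (by omega) (by omega)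
    subst ha1; subst hbn
    exact hncol ⟨hsec, by omega, by simp only [hω₃]; omega, by simpa using hdir0, by simpa using hdirn⟩
  

end LWF
end
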